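/- arXiv:0906.4187 — 6 statements merged into one kernel-verified Lean document; each statement's English description precedes it below -/
import Mathlib

section
/- Let ρ be a density matrix on a bipartite Hilbert space H_A ⊗ H_B that admits a product eigenbasis, i.e., ρ = Σ_{j,k} e_{jk} |a_j⟩⟨a_j| ⊗ |b_k⟩⟨b_k| for orthonormal bases {|a_j⟩} of H_A and {|b_k⟩} of H_B. Let η be an eigenvalue of ρ, let P_η be the orthogonal projection onto the η-eigenspace, and let ρ̃^η = η P_η be the truncation of ρ to that eigenspace. Then every eigenvalue of the partial trace Tr_B ρ̃^η is an integer multiple of η (and likewise for Tr_A ρ̃^η). -/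
open Matrix Kronecker Finset
open scoped ComplexOrder

attribute [local instance] Classical.propDecidable

noncomputable section

/-- nearest integer multiple of `y` to `x`, ties broken downward; `0` if `y = 0`. -/
def nim (y x : ℝ) : ℝ :=
  if y = 0 then 0
  else if x - y * ⌊x / y⌋ ≤ y * ⌈x / y⌉ - x then y * ⌊x / y⌋ else y * ⌈x / y⌉

/-- partial trace over the second (B) factor -/
def ptraceB {α β : Type*} [Fintype α] [Fintype β]
    (ρ : Matrix (α × β) (α × β) ℂ) : Matrix α α ℂ :=
  fun a a' => ∑ b : β, ρ (a, b) (a', b)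

/-- partial trace over the first (A) factor -/
def ptraceA {α β : Type*} [Fintype α] [Fintype β]
    (ρ : Matrix (α × β) (α × β) ℂ) : Matrix β β ℂ :=
  fun b b' => ∑ a : α, ρ (a, b) (a, b')

/-- the (real) eigenvalues of a Hermitian matrix, junk value `0` otherwise -/
def evalsR {n : Type*} [Fintype n] [DecidableEq n] (A : Matrix n n ℂ) : n → ℝ :=
  if h : A.IsHermitian then h.eigenvalues else 0

/-- orthogonal projection onto the η-eigenspace of a Hermitian matrix -/
def eigProj {n : Type*} [Fintype n] [DecidableEq n] (ρ : Matrix n n ℂ) (η : ℝ) :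
    Matrix n n ℂ :=
  if h : ρ.IsHermitian then
    ∑ k ∈ univ.filter (fun k => h.eigenvalues k = η),
      vecMulVec (fun i => h.eigenvectorBasis k i) (star fun i => h.eigenvectorBasis k i)
  else 0

/-- truncation of ρ down to the η-eigenspace: `η • P_η` -/
def trunc {n : Type*} [Fintype n] [DecidableEq n] (ρ : Matrix n n ℂ) (η : ℝ) :
    Matrix n n ℂ := (η : ℂ) • eigProj ρ η

/-- dimension of the η-eigenspace -/
def dimEig {n : Type*} [Fintype n] [DecidableEq n] (ρ : Matrix n n ℂ) (η : ℝ) : ℕ :=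
  if h : ρ.IsHermitian then (univ.filter (fun k => h.eigenvalues k = η)).card else 0

/-- a single term of the measure `M` -/
def Mterm (η T lam : ℝ) : ℝ := -(|lam - nim η lam| * Real.logb 2 (lam / T))

/-- the measure `M` seen from side A -/
def MmeasA {α β : Type*} [Fintype α] [Fintype β] [DecidableEq α] [DecidableEq β]
    (ρ : Matrix (α × β) (α × β) ℂ) : ℝ :=
  ∑ η ∈ Finset.image (evalsR ρ) univ, ∑ i : α,
    Mterm η (η * (dimEig ρ η : ℝ)) (evalsR (ptraceB (trunc ρ η)) i)

/-- the measure `M` seen from side B -/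
def MmeasB {α β : Type*} [Fintype α] [Fintype β] [DecidableEq α] [DecidableEq β]
    (ρ : Matrix (α × β) (α × β) ℂ) : ℝ :=
  ∑ η ∈ Finset.image (evalsR ρ) univ, ∑ i : β,
    Mterm η (η * (dimEig ρ η : ℝ)) (evalsR (ptraceA (trunc ρ η)) i)

/-- the measure `M` of nonclassical correlation -/
def Mmeas {α β : Type*} [Fintype α] [Fintype β] [DecidableEq α] [DecidableEq β]
    (ρ : Matrix (α × β) (α × β) ℂ) : ℝ := (MmeasA ρ + MmeasB ρ) / 2

def IsDensityMatrix {n : Type*} [Fintype n] [DecidableEq n] (ρ : Matrix n n ℂ) : Prop :=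
  ρ.PosSemidef ∧ ρ.trace = 1

/-- ρ admits an eigenbasis consisting of product vectors -/
def HasProductEigenbasis {α β : Type*} [Fintype α] [Fintype β] [DecidableEq α] [DecidableEq β]
    (ρ : Matrix (α × β) (α × β) ℂ) : Prop :=
  ∃ (a : α → α → ℂ) (b : β → β → ℂ) (e : α → β → ℝ),
    (∀ j j', ∑ i, star (a j i) * a j' i = if j = j' then 1 else 0) ∧
    (∀ k k', ∑ i, star (b k i) * b k' i = if k = k' then 1 else 0) ∧
    ρ = ∑ j : α, ∑ k : β,
      (e j k : ℂ) • (vecMulVec (a j) (star (a j)) ⊗ₖ vecMulVec (b k) (star (b k)))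


noncomputable section

variable {n : Type*} [Fintype n] [DecidableEq n]

/-- rank-one product rule -/
lemma vmv_mul (u v x y : n → ℂ) :
    vecMulVec u (star v) * vecMulVec x (star y)
      = (star v ⬝ᵥ x) • vecMulVec u (star y) := by
  ext i j
  simp only [Matrix.mul_apply, vecMulVec_apply, Matrix.smul_apply, dotProduct,
    Pi.star_apply, smul_eq_mul, Finset.sum_mul]
  rw [Finset.sum_congr rfl]
  intro k _
  ring

lemma vmv_herm (u : n → ℂ) :
    (vecMulVec u (star u))ᴴ = vecMulVec u (star u) := by
  ext i j
  simp [vecMulVec_apply, mul_comm]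

/-- completeness: an orthonormal family indexed by `n` itself sums to `1`. -/
lemma vmv_complete (u : n → n → ℂ)
    (hu : ∀ i j, star (u i) ⬝ᵥ u j = if i = j then 1 else 0) :
    ∑ i, vecMulVec (u i) (star (u i)) = 1 := by
  set W : Matrix n n ℂ := fun i j => u j i with hW
  have h1 : Wᴴ * W = 1 := by
    ext i j
    simp only [Matrix.mul_apply, conjTranspose_apply]
    simpa [Matrix.mul_apply, Matrix.one_apply, hW, conjTranspose_apply, dotProduct,
      Pi.star_apply] using hu i j
  have h2 : W * Wᴴ = 1 := mul_eq_one_comm.mp h1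
  calc ∑ i, vecMulVec (u i) (star (u i)) = W * Wᴴ := by
        ext i j
        simp only [Matrix.mul_apply, conjTranspose_apply]
        simp [Matrix.sum_apply, Matrix.mul_apply, vecMulVec_apply, hW, conjTranspose_apply]
      _ = 1 := h2
end
noncomputable section
set_option linter.unusedSectionVars false
variable {n : Type*} [Fintype n] [DecidableEq n]

lemma half (u w : n → n → ℂ) (d c : n → ℂ)
    (hu : ∀ i j, star (u i) ⬝ᵥ u j = if i = j then 1 else 0)
    (hw : ∀ i j, star (w i) ⬝ᵥ w j = if i = j then 1 else 0)
    (hd : ∑ i, d i • vecMulVec (u i) (star (u i))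
        = ∑ i, c i • vecMulVec (w i) (star (w i))) (η : ℂ) :
    (∑ i ∈ univ.filter (fun i => c i = η), vecMulVec (w i) (star (w i)))
      * (∑ i ∈ univ.filter (fun i => d i = η), vecMulVec (u i) (star (u i)))
    = ∑ i ∈ univ.filter (fun i => d i = η), vecMulVec (u i) (star (u i)) := by
  set V : n → Matrix n n ℂ := fun i => vecMulVec (u i) (star (u i)) with hV
  set W : n → Matrix n n ℂ := fun i => vecMulVec (w i) (star (w i)) with hWdef
  set P : Matrix n n ℂ := ∑ i ∈ univ.filter (fun i => d i = η), V i with hP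
  have hVV : ∀ i j, V i * V j = if i = j then V i else 0 := by
    intro i j
    rw [hV, vmv_mul, hu i j]
    split <;> simp_all
  have hWW : ∀ i j, W i * W j = if i = j then W i else 0 := by
    intro i j
    rw [hWdef, vmv_mul, hw i j]
    split <;> simp_all
  -- ρ * P = η • P
  have hrhoP : (∑ i, d i • V i) * P = η • P := by
    rw [hP, Finset.mul_sum, Finset.smul_sum]
    apply Finset.sum_congr rfl
    intro j hj
    rw [Finset.sum_mul]
    have : ∀ i ∈ univ, (d i • V i) * V j = if i = j then d i • V i else 0 := by
      intro i _
      rw [smul_mul_assoc, hVV]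
      split <;> simp_all
    rw [Finset.sum_congr rfl this, Finset.sum_ite_eq' univ j (fun i => d i • V i)]
    simp only [mem_univ, if_true]
    rw [(Finset.mem_filter.mp hj).2]
  -- completeness of w
  have hWone : ∑ i, W i = 1 := vmv_complete w hw
  -- combine
  have hkey : ∑ i, ((c i - η) • (W i * P)) = 0 := by
    have h1 : ∑ i, c i • (W i * P) = η • P := by
      rw [← hrhoP, hd, Finset.sum_mul]
      exact Finset.sum_congr rfl fun i _ => (smul_mul_assoc _ _ _).symm
    have h2 : ∑ i, (W i * P) = P := by
      rw [← Finset.sum_mul, hWone, one_mul]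
    calc ∑ i, ((c i - η) • (W i * P))
        = ∑ i, (c i • (W i * P)) - η • ∑ i, (W i * P) := by
          rw [Finset.smul_sum, ← Finset.sum_sub_distrib]
          exact Finset.sum_congr rfl fun i _ => sub_smul _ _ _
      _ = 0 := by rw [h1, h2, sub_self]
  have hzero : ∀ l, c l ≠ η → W l * P = 0 := by
    intro l hl
    have := congrArg (fun M => W l * M) hkey
    simp only [Finset.mul_sum, Matrix.mul_zero, Matrix.mul_smul] at this
    rw [Finset.sum_congr rfl (fun i _ => by rw [← Matrix.mul_assoc, hWW])] at this
    simp only [ite_mul, Matrix.zero_mul, smul_ite, smul_zero] at this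
    rw [Finset.sum_ite_eq univ l (fun i => (c i - η) • (W l * P))] at this
    simp only [mem_univ, if_true] at this
    have hne : c l - η ≠ 0 := sub_ne_zero.mpr hl
    exact (smul_eq_zero.mp this).resolve_left hne
  -- Q * P = P
  calc (∑ i ∈ univ.filter (fun i => c i = η), W i) * P
      = ∑ i ∈ univ.filter (fun i => c i = η), W i * P := Finset.sum_mul _ _ _
    _ = ∑ i, W i * P := by
        apply Finset.sum_subset (Finset.filter_subset _ _)
        intro x _ hx
        simp only [Finset.mem_filter, mem_univ, true_and] at hx
        exact hzero x hx
    _ = P := by rw [← Finset.sum_mul, hWone, one_mul]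

lemma specProj_unique (u w : n → n → ℂ) (d c : n → ℂ)
    (hu : ∀ i j, star (u i) ⬝ᵥ u j = if i = j then 1 else 0)
    (hw : ∀ i j, star (w i) ⬝ᵥ w j = if i = j then 1 else 0)
    (hd : ∑ i, d i • vecMulVec (u i) (star (u i))
        = ∑ i, c i • vecMulVec (w i) (star (w i))) (η : ℂ) :
    ∑ i ∈ univ.filter (fun i => d i = η), vecMulVec (u i) (star (u i))
      = ∑ i ∈ univ.filter (fun i => c i = η), vecMulVec (w i) (star (w i)) := by
  have h1 := half u w d c hu hw hd η
  have h2 := half w u c d hw hu hd.symm η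
  -- star of h1 : P * Q = P  (since P,Q hermitian)
  set P := ∑ i ∈ univ.filter (fun i => d i = η), vecMulVec (u i) (star (u i)) with hP
  set Q := ∑ i ∈ univ.filter (fun i => c i = η), vecMulVec (w i) (star (w i)) with hQ
  have hPh : Pᴴ = P := by
    rw [hP, conjTranspose_sum]
    exact Finset.sum_congr rfl fun i _ => vmv_herm _
  have hQh : Qᴴ = Q := by
    rw [hQ, conjTranspose_sum]
    exact Finset.sum_congr rfl fun i _ => vmv_herm _
  have h3 : P * Q = P := by
    have := congrArg conjTranspose h1
    rwa [conjTranspose_mul, hPh, hQh] at this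
  rw [← h3, h2]
end
noncomputable section
set_option linter.unusedSectionVars false
variable {n : Type*} [Fintype n] [DecidableEq n]

lemma spectrum_of_diag (u : n → n → ℂ) (t : n → ℂ)
    (hu : ∀ i j, star (u i) ⬝ᵥ u j = if i = j then 1 else 0)
    (μ : ℂ) (hμ : μ ∈ spectrum ℂ (∑ i, t i • vecMulVec (u i) (star (u i)))) :
    ∃ i, μ = t i := by
  by_contra h
  push_neg at h
  set V : n → Matrix n n ℂ := fun i => vecMulVec (u i) (star (u i)) with hV
  have hVV : ∀ i j, V i * V j = if i = j then V i else 0 := by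
    intro i j
    rw [hV, vmv_mul, hu i j]
    split <;> simp_all
  have hone : ∑ i, V i = 1 := vmv_complete u hu
  rw [spectrum.mem_iff] at hμ
  apply hμ
  set A : Matrix n n ℂ := algebraMap ℂ _ μ - ∑ i, t i • V i with hA
  have hArep : A = ∑ i, (μ - t i) • V i := by
    rw [hA, Algebra.algebraMap_eq_smul_one, ← hone, Finset.smul_sum,
      ← Finset.sum_sub_distrib]
    exact Finset.sum_congr rfl fun i _ => (sub_smul _ _ _).symm
  set N : Matrix n n ℂ := ∑ i, (μ - t i)⁻¹ • V i with hN
  have hprod : A * N = 1 := by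
    rw [hArep, hN, Finset.sum_mul]
    have : ∀ i ∈ univ, ((μ - t i) • V i) * ∑ j, (μ - t j)⁻¹ • V j = V i := by
      intro i _
      rw [Finset.mul_sum]
      have : ∀ j ∈ univ, ((μ - t i) • V i) * ((μ - t j)⁻¹ • V j)
          = if j = i then V i else 0 := by
        intro j _
        rw [smul_mul_assoc, Matrix.mul_smul, hVV, smul_ite, smul_ite, smul_zero, smul_zero]
        rcases eq_or_ne i j with rfl | hij
        · rw [if_pos rfl, if_pos rfl, smul_smul, mul_inv_cancel₀ (sub_ne_zero.mpr (h i)),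
            one_smul]
        · rw [if_neg hij, if_neg (Ne.symm hij)]
      rw [Finset.sum_congr rfl this, Finset.sum_ite_eq' univ i (fun _ => V i)]
      simp
    rw [Finset.sum_congr rfl this, hone]
  exact ⟨⟨A, N, hprod, mul_eq_one_comm.mp hprod⟩, rfl⟩

end

section Helpers
set_option linter.unusedSectionVars false
variable {n : Type*} [Fintype n] [DecidableEq n]

lemma mul_vmv (ρ : Matrix n n ℂ) (x y : n → ℂ) :
    ρ * vecMulVec x y = vecMulVec (ρ *ᵥ x) y := by
  ext i j
  simp only [Matrix.mul_apply, vecMulVec_apply, mulVec, dotProduct, Finset.sum_mul]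
  exact Finset.sum_congr rfl fun k _ => by ring

lemma vmv_real_smul (r : ℝ) (x y : n → ℂ) :
    vecMulVec (r • x) y = (r : ℂ) • vecMulVec x y := by
  ext i j
  simp [vecMulVec_apply, Complex.real_smul]
  ring

lemma eigbasis_on (ρ : Matrix n n ℂ) (h : ρ.IsHermitian) (i j : n) :
    star (fun x => h.eigenvectorBasis i x) ⬝ᵥ (fun x => h.eigenvectorBasis j x)
      = if i = j then 1 else 0 := by
  have := (orthonormal_iff_ite.mp h.eigenvectorBasis.orthonormal) i j
  rw [EuclideanSpace.inner_eq_star_dotProduct, dotProduct_comm] at this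
  exact this

lemma herm_spectral (ρ : Matrix n n ℂ) (h : ρ.IsHermitian) :
    ρ = ∑ m, (h.eigenvalues m : ℂ) •
      vecMulVec (fun i => h.eigenvectorBasis m i) (star fun i => h.eigenvectorBasis m i) := by
  calc ρ = ρ * ∑ m, vecMulVec (fun i => h.eigenvectorBasis m i)
            (star fun i => h.eigenvectorBasis m i) := by
        rw [vmv_complete _ (eigbasis_on ρ h), Matrix.mul_one]
    _ = ∑ m, (h.eigenvalues m : ℂ) • vecMulVec (fun i => h.eigenvectorBasis m i)
            (star fun i => h.eigenvectorBasis m i) := by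
        rw [Finset.mul_sum]
        refine Finset.sum_congr rfl fun m _ => ?_
        rw [mul_vmv]
        have hm : ρ *ᵥ (fun i => h.eigenvectorBasis m i)
            = h.eigenvalues m • (fun i => h.eigenvectorBasis m i) :=
          h.mulVec_eigenvectorBasis m
        rw [hm, vmv_real_smul]

end Helpers

section PTHelpers
set_option linter.unusedSectionVars false
variable {α β : Type*} [Fintype α] [Fintype β] [DecidableEq α] [DecidableEq β]

lemma ptraceB_smul (c : ℂ) (ρ : Matrix (α × β) (α × β) ℂ) :
    ptraceB (c • ρ) = c • ptraceB ρ := by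
  ext i j
  simp [ptraceB, Finset.mul_sum]

lemma ptraceA_smul (c : ℂ) (ρ : Matrix (α × β) (α × β) ℂ) :
    ptraceA (c • ρ) = c • ptraceA ρ := by
  ext i j
  simp [ptraceA, Finset.mul_sum]

lemma ptraceB_sum {ι : Type*} (s : Finset ι) (f : ι → Matrix (α × β) (α × β) ℂ) :
    ptraceB (∑ i ∈ s, f i) = ∑ i ∈ s, ptraceB (f i) := by
  ext x y
  simp only [ptraceB, Matrix.sum_apply]
  exact Finset.sum_comm

lemma ptraceA_sum {ι : Type*} (s : Finset ι) (f : ι → Matrix (α × β) (α × β) ℂ) :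
    ptraceA (∑ i ∈ s, f i) = ∑ i ∈ s, ptraceA (f i) := by
  ext x y
  simp only [ptraceA, Matrix.sum_apply]
  exact Finset.sum_comm

lemma ptraceB_vmv (x : α → ℂ) (y : β → ℂ) (hy : ∑ i, star (y i) * y i = 1) :
    ptraceB (vecMulVec (fun p : α × β => x p.1 * y p.2) (star fun p : α × β => x p.1 * y p.2))
      = vecMulVec x (star x) := by
  ext i i'
  simp only [ptraceB, vecMulVec_apply, Pi.star_apply, star_mul']
  calc ∑ bb : β, x i * y bb * (star (x i') * star (y bb))
      = (x i * star (x i')) * ∑ bb, star (y bb) * y bb := by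
        rw [Finset.mul_sum]
        exact Finset.sum_congr rfl fun bb _ => by ring
    _ = x i * star (x i') := by rw [hy, mul_one]

lemma ptraceA_vmv (x : α → ℂ) (y : β → ℂ) (hx : ∑ i, star (x i) * x i = 1) :
    ptraceA (vecMulVec (fun p : α × β => x p.1 * y p.2) (star fun p : α × β => x p.1 * y p.2))
      = vecMulVec y (star y) := by
  ext i i'
  simp only [ptraceA, vecMulVec_apply, Pi.star_apply, star_mul']
  calc ∑ aa : α, x aa * y i * (star (x aa) * star (y i'))
      = (y i * star (y i')) * ∑ aa, star (x aa) * x aa := by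
        rw [Finset.mul_sum]
        exact Finset.sum_congr rfl fun aa _ => by ring
    _ = y i * star (y i') := by rw [hx, mul_one]

end PTHelpers

/-- if a bipartite density matrix has a product eigenbasis, then every
eigenvalue of the partial trace of the truncation `η • P_η` is an integer multiple of `η`
(both for `Tr_B` and `Tr_A`). -/
theorem eigenvalues_of_partial_trace_of_truncation_are_integer_multiples
    {α β : Type*} [Fintype α] [Fintype β] [DecidableEq α] [DecidableEq β]
    (ρ : Matrix (α × β) (α × β) ℂ) (hρ : IsDensityMatrix ρ)
    (hpe : HasProductEigenbasis ρ) (η : ℝ) (hη : ∃ k, evalsR ρ k = η) :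
    (∀ μ ∈ spectrum ℂ (ptraceB (trunc ρ η)), ∃ k : ℕ, μ = (k : ℂ) * (η : ℂ)) ∧
    (∀ μ ∈ spectrum ℂ (ptraceA (trunc ρ η)), ∃ k : ℕ, μ = (k : ℂ) * (η : ℂ)) := by
  obtain ⟨hpsd, -⟩ := hρ
  have hherm : ρ.IsHermitian := hpsd.1
  obtain ⟨a, b, e, ha, hb, hrep⟩ := hpe
  set v : α × β → α × β → ℂ := fun p q => a p.1 q.1 * b p.2 q.2 with hv
  have ha' : ∀ i j, star (a i) ⬝ᵥ a j = if i = j then 1 else 0 := by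
    intro i j
    simpa [dotProduct] using ha i j
  have hb' : ∀ i j, star (b i) ⬝ᵥ b j = if i = j then 1 else 0 := by
    intro i j
    simpa [dotProduct] using hb i j
  have hvon : ∀ p p', star (v p) ⬝ᵥ v p' = if p = p' then 1 else 0 := by
    intro p p'
    have h1 : star (v p) ⬝ᵥ v p'
        = ∑ i, ∑ j, (star (a p.1 i) * a p'.1 i) * (star (b p.2 j) * b p'.2 j) := by
      rw [dotProduct, Fintype.sum_prod_type]
      refine Finset.sum_congr rfl fun i _ => Finset.sum_congr rfl fun j _ => ?_
      simp only [hv, Pi.star_apply, star_mul']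
      ring
    rw [h1, ← Finset.sum_mul_sum, ha, hb]
    rcases eq_or_ne p p' with rfl | hne
    · simp
    · rw [if_neg hne]
      have hor : p.1 ≠ p'.1 ∨ p.2 ≠ p'.2 := by
        by_contra hc
        push_neg at hc
        exact hne (Prod.ext hc.1 hc.2)
      rcases hor with h | h
      · rw [if_neg h, zero_mul]
      · rw [if_neg h, mul_zero]
  have hkron : ∀ j k, vecMulVec (a j) (star (a j)) ⊗ₖ vecMulVec (b k) (star (b k))
      = vecMulVec (v (j, k)) (star (v (j, k))) := by
    intro j k
    ext ⟨i1, i2⟩ ⟨i1', i2'⟩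
    simp only [kroneckerMap_apply, vecMulVec_apply, hv, Pi.star_apply, star_mul']
    ring
  have hrep' : ρ = ∑ p : α × β, (e p.1 p.2 : ℂ) • vecMulVec (v p) (star (v p)) := by
    rw [hrep, Fintype.sum_prod_type]
    exact Finset.sum_congr rfl fun j _ => Finset.sum_congr rfl fun k _ => by rw [hkron]
  have heig : eigProj ρ η
      = ∑ p ∈ univ.filter (fun p : α × β => e p.1 p.2 = η), vecMulVec (v p) (star (v p)) := by
    rw [eigProj, dif_pos hherm]
    have key := specProj_unique (fun m => fun i => hherm.eigenvectorBasis m i) v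
        (fun m => (hherm.eigenvalues m : ℂ)) (fun p => (e p.1 p.2 : ℂ))
        (eigbasis_on ρ hherm) hvon
        (by rw [← herm_spectral ρ hherm, hrep']) (η : ℂ)
    have e1 : (univ.filter fun k => hherm.eigenvalues k = η)
        = univ.filter (fun k => (hherm.eigenvalues k : ℂ) = (η : ℂ)) :=
      Finset.filter_congr fun x _ => by simp
    have e2 : (univ.filter fun p : α × β => (e p.1 p.2 : ℂ) = (η : ℂ))
        = univ.filter (fun p : α × β => e p.1 p.2 = η) :=
      Finset.filter_congr fun x _ => by simp
    rw [e1, key, e2]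
  have hbb : ∀ k, ∑ i, star (b k i) * b k i = 1 := fun k => by simpa using hb k k
  have haa : ∀ j, ∑ i, star (a j i) * a j i = 1 := fun j => by simpa using ha j j
  have hptB : ptraceB (trunc ρ η) = ∑ j : α,
      ((η : ℂ) * ((univ.filter fun k => e j k = η).card : ℂ))
        • vecMulVec (a j) (star (a j)) := by
    rw [trunc, heig, ptraceB_smul, ptraceB_sum]
    have hterm : ∀ p ∈ univ.filter (fun p : α × β => e p.1 p.2 = η),
        ptraceB (vecMulVec (v p) (star (v p))) = vecMulVec (a p.1) (star (a p.1)) :=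
      fun p _ => ptraceB_vmv (a p.1) (b p.2) (hbb p.2)
    rw [Finset.sum_congr rfl hterm, Finset.sum_filter, Fintype.sum_prod_type, Finset.smul_sum]
    refine Finset.sum_congr rfl fun j _ => ?_
    dsimp only
    rw [← Finset.sum_filter, Finset.sum_const, ← Nat.cast_smul_eq_nsmul ℂ, smul_smul]
  have hptA : ptraceA (trunc ρ η) = ∑ k : β,
      ((η : ℂ) * ((univ.filter fun j => e j k = η).card : ℂ))
        • vecMulVec (b k) (star (b k)) := by
    rw [trunc, heig, ptraceA_smul, ptraceA_sum]
    have hterm : ∀ p ∈ univ.filter (fun p : α × β => e p.1 p.2 = η),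
        ptraceA (vecMulVec (v p) (star (v p))) = vecMulVec (b p.2) (star (b p.2)) :=
      fun p _ => ptraceA_vmv (a p.1) (b p.2) (haa p.1)
    rw [Finset.sum_congr rfl hterm, Finset.sum_filter, Fintype.sum_prod_type, Finset.sum_comm,
      Finset.smul_sum]
    refine Finset.sum_congr rfl fun k _ => ?_
    dsimp only
    rw [← Finset.sum_filter, Finset.sum_const, ← Nat.cast_smul_eq_nsmul ℂ, smul_smul]
  constructor
  · intro μ hμ
    rw [hptB] at hμ
    obtain ⟨j, hj⟩ := spectrum_of_diag a _ ha' μ hμ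
    exact ⟨(univ.filter fun k => e j k = η).card, by rw [hj]; ring⟩
  · intro μ hμ
    rw [hptA] at hμ
    obtain ⟨k, hk⟩ := spectrum_of_diag b _ hb' μ hμ
    exact ⟨(univ.filter fun j => e j k = η).card, by rw [hk]; ring⟩

end
end

section
/- Let X = {{x_i^j}_{i=1}^{d_j}}_{j=1}^m and Y = {{y_i^j}_{i=1}^{d_j}}_{j=1}^m be collections of nonnegative reals with Σ_{j,i} x_i^j = Σ_{j,i} y_i^j = 1. Define T_j = Σ_{i=1}^{d_j} x_i^j, s(x,y) = −|x − y| log₂(x/T_j) (interpreted as 0 when x = 0), and S̃(X,Y) = Σ_{j,i} s(x_i^j, y_i^j). If y_i^j ≤ 2 x_i^j for all i, j, then S̃(X,Y) ≤ log₂(max_j d_j). -/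
open Matrix Kronecker Finset
open scoped ComplexOrder

attribute [local instance] Classical.propDecidable

noncomputable section

/-- the discrepancy term `s(x, y) = -|x - y| log₂ (x / T)`, interpreted as `0` when `x = 0` -/
def sFun (T x y : ℝ) : ℝ := if x = 0 then 0 else -(|x - y| * Real.logb 2 (x / T))

lemma sFun_le_aux (T x y : ℝ) (hx0 : 0 ≤ x) (hxT : x ≤ T) (hy0 : 0 ≤ y)
    (hyx : y ≤ 2 * x) : sFun T x y ≤ -(x * Real.logb 2 (x / T)) := by
  unfold sFun
  by_cases hx : x = 0
  · simp [hx]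
  · simp only [hx, if_false]
    have hxpos : 0 < x := lt_of_le_of_ne hx0 (Ne.symm hx)
    have hTpos : 0 < T := lt_of_lt_of_le hxpos hxT
    have hL : Real.logb 2 (x / T) ≤ 0 :=
      Real.logb_nonpos one_lt_two (by positivity) ((div_le_one hTpos).mpr hxT)
    have habs : |x - y| ≤ x := abs_le.mpr ⟨by linarith, by linarith⟩
    nlinarith [mul_le_mul_of_nonpos_right habs hL]

lemma group_log_bound (n : ℕ) (hn : 1 ≤ n) (x : Fin n → ℝ) (hx : ∀ i, 0 ≤ x i) :
    ∑ i, -(x i * Real.logb 2 (x i / (∑ i', x i'))) ≤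
      (∑ i', x i') * Real.logb 2 (n : ℝ) := by
  set T := ∑ i', x i' with hT
  by_cases hT0 : T = 0
  · have hz : ∀ i, x i = 0 := by
      intro i
      exact (Finset.sum_eq_zero_iff_of_nonneg (fun i _ => hx i)).mp hT0 i (mem_univ i)
    simp [hz, hT0]
  · have hTpos : 0 < T := lt_of_le_of_ne (Finset.sum_nonneg fun i _ => hx i) (Ne.symm hT0)
    have hnpos : (0:ℝ) < n := by exact_mod_cast hn
    have hlogd : 0 ≤ Real.log n := Real.log_nonneg (by exact_mod_cast hn)
    -- pointwise bound in natural log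
    have key : ∀ i, -(x i * Real.log (x i / T)) ≤ (T / n - x i) + x i * Real.log n := by
      intro i
      by_cases hxi : x i = 0
      · simp only [hxi, zero_div, Real.log_zero, mul_zero, neg_zero, zero_mul, add_zero,
          sub_zero]
        positivity
      · have hxpos : 0 < x i := lt_of_le_of_ne (hx i) (Ne.symm hxi)
        have h1 : -(x i * Real.log (x i / T)) = x i * Real.log (T / x i) := by
          rw [Real.log_div hxi (ne_of_gt hTpos), Real.log_div (ne_of_gt hTpos) hxi]
          ring
        rw [h1]
        have h2 : Real.log (T / x i) = Real.log ((T / n) / x i) + Real.log n := by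
          rw [← Real.log_mul (by positivity) (by positivity)]
          congr 1
          field_simp
        rw [h2, mul_add]
        have h3 : Real.log ((T / n) / x i) ≤ (T / n) / x i - 1 :=
          Real.log_le_sub_one_of_pos (by positivity)
        have h4 : x i * Real.log ((T / n) / x i) ≤ T / n - x i := by
          have := mul_le_mul_of_nonneg_left h3 (le_of_lt hxpos)
          calc x i * Real.log ((T / n) / x i) ≤ x i * ((T / n) / x i - 1) := this
            _ = T / n - x i := by field_simp
        linarith
    have hsum : ∑ i, -(x i * Real.log (x i / T)) ≤ T * Real.log n := by
      calc ∑ i, -(x i * Real.log (x i / T))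
          ≤ ∑ i, ((T / n - x i) + x i * Real.log n) :=
            Finset.sum_le_sum fun i _ => key i
        _ = (n : ℝ) * (T / n) - T + T * Real.log n := by
            rw [Finset.sum_add_distrib, Finset.sum_sub_distrib, ← Finset.sum_mul, ← hT,
              Finset.sum_const, Finset.card_univ, Fintype.card_fin, nsmul_eq_mul]
        _ = T * Real.log n := by field_simp; ring
    -- convert to logb
    have hlog2 : (0:ℝ) < Real.log 2 := Real.log_pos one_lt_two
    have : ∑ i, -(x i * Real.logb 2 (x i / T)) =
        (∑ i, -(x i * Real.log (x i / T))) / Real.log 2 := by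
      rw [Finset.sum_div]
      congr 1; ext i
      rw [Real.logb]; ring
    rw [this, Real.logb, div_le_iff₀ hlog2]
    calc ∑ i, -(x i * Real.log (x i / T))
        ≤ T * Real.log n := hsum
      _ = T * (Real.log n / Real.log 2) * Real.log 2 := by field_simp

/-- if `y_i^j ≤ 2 x_i^j` for all `i, j`, then
`S̃(X, Y) ≤ log₂ (max_j d_j)`. -/
theorem tildeS_le_logb_max_card
    (m : ℕ) (hm : 0 < m) (d : Fin m → ℕ) (hd : ∀ j, 1 ≤ d j)
    (x y : (j : Fin m) → Fin (d j) → ℝ)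
    (hx : ∀ j i, 0 ≤ x j i) (hy : ∀ j i, 0 ≤ y j i)
    (hxs : ∑ j, ∑ i, x j i = 1) (hys : ∑ j, ∑ i, y j i = 1)
    (hyx : ∀ j i, y j i ≤ 2 * x j i) :
    ∑ j, ∑ i, sFun (∑ i', x j i') (x j i) (y j i) ≤
      Real.logb 2 ((univ.sup d : ℕ) : ℝ) := by
  set D : ℕ := univ.sup d with hD
  have hD1 : 1 ≤ D := by
    obtain ⟨j⟩ := Fin.pos_iff_nonempty.mp hm
    exact le_trans (hd j) (Finset.le_sup (mem_univ j))
  have hstep : ∀ j : Fin m, ∑ i, sFun (∑ i', x j i') (x j i) (y j i) ≤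
      (∑ i', x j i') * Real.logb 2 (D : ℝ) := by
    intro j
    have hT : ∀ i, x j i ≤ ∑ i', x j i' :=
      fun i => Finset.single_le_sum (fun i' _ => hx j i') (mem_univ i)
    calc ∑ i, sFun (∑ i', x j i') (x j i) (y j i)
        ≤ ∑ i, -(x j i * Real.logb 2 (x j i / (∑ i', x j i'))) :=
          Finset.sum_le_sum fun i _ =>
            sFun_le_aux _ _ _ (hx j i) (hT i) (hy j i) (hyx j i)
      _ ≤ (∑ i', x j i') * Real.logb 2 ((d j : ℕ) : ℝ) :=
          group_log_bound (d j) (hd j) (x j) (hx j)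
      _ ≤ (∑ i', x j i') * Real.logb 2 (D : ℝ) := by
          apply mul_le_mul_of_nonneg_left _ (Finset.sum_nonneg fun i _ => hx j i)
          have h0 : (0:ℝ) < (d j : ℝ) := by exact_mod_cast hd j
          exact Real.logb_le_logb_of_le one_lt_two h0
            (by exact_mod_cast Finset.le_sup (mem_univ j))
  calc ∑ j, ∑ i, sFun (∑ i', x j i') (x j i) (y j i)
      ≤ ∑ j, (∑ i', x j i') * Real.logb 2 (D : ℝ) :=
        Finset.sum_le_sum fun j _ => hstep j
    _ = Real.logb 2 (D : ℝ) := by rw [← Finset.sum_mul, hxs, one_mul]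

end
end

section
/- If a bipartite density matrix ρ^{AB} has a product eigenbasis, then the measure M(ρ^{AB}) = (M^A(ρ^{AB}) + M^B(ρ^{AB}))/2 vanishes, where M^A(ρ^{AB}) = −Σ_{j=1}^m Σ_{i=1}^{d_j^A} |λ_i^{j,A} − nim_{η_j}(λ_i^{j,A})| log₂(λ_i^{j,A}/(η_j d^{η_j})), with η_1,…,η_m the distinct eigenvalues of ρ^{AB}, λ_i^{j,A} the nonzero eigenvalues of Tr_B ρ̃^{η_j}, and d^{η_j} the dimension of the η_j-eigenspace; M^B is defined analogously. -/
open Matrix Kronecker Finset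
open scoped ComplexOrder

attribute [local instance] Classical.propDecidable
set_option maxRecDepth 8000

noncomputable section

lemma complete_of_ortho {n : Type*} [Fintype n] [DecidableEq n] (v : n → n → ℂ)
    (h : ∀ j j', ∑ i, star (v j i) * v j' i = if j = j' then 1 else 0) :
    ∑ j, vecMulVec (v j) (star (v j)) = (1 : Matrix n n ℂ) := by
  classical
  let V : Matrix n n ℂ := Matrix.of fun i j => v j i
  have h1 : Vᴴ * V = 1 := by
    ext j j'
    simpa [Matrix.mul_apply, V, Matrix.conjTranspose_apply, Matrix.one_apply] using h j j'
  have h2 : V * Vᴴ = 1 := mul_eq_one_comm.mp h1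
  ext i i'
  have := congrFun (congrFun (congrArg (fun M : Matrix n n ℂ => (M : n → n → ℂ)) h2) i) i'
  simpa [Matrix.mul_apply, V, Matrix.conjTranspose_apply, Matrix.sum_apply,
    vecMulVec_apply, Pi.star_apply] using this

lemma vecMulVec_mulVec' {n : Type*} [Fintype n] (u w x : n → ℂ) :
    vecMulVec u w *ᵥ x = (∑ i, w i * x i) • u := by
  ext i
  simp only [Matrix.mulVec, dotProduct, vecMulVec_apply, Pi.smul_apply, smul_eq_mul,
    Finset.sum_mul]
  exact Finset.sum_congr rfl fun j _ => by ring

lemma mul_vecMulVec' {n m : Type*} [Fintype n] [Fintype m] (M : Matrix n n ℂ) (u : n → ℂ)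
    (w : m → ℂ) : M * vecMulVec u w = vecMulVec (M *ᵥ u) w := by
  ext i j
  simp only [Matrix.mul_apply, vecMulVec_apply, Matrix.mulVec, dotProduct, Finset.sum_mul]
  exact Finset.sum_congr rfl fun r _ => by ring

lemma sum_mulVec' {ι n m : Type*} [Fintype n] (s : Finset ι) (A : ι → Matrix m n ℂ)
    (x : n → ℂ) : (∑ i ∈ s, A i) *ᵥ x = ∑ i ∈ s, A i *ᵥ x := by
  ext r
  simp only [Matrix.mulVec, dotProduct, Matrix.sum_apply, Finset.sum_apply, Finset.sum_mul]
  exact Finset.sum_comm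

lemma eigProj_formula {α β : Type*} [Fintype α] [Fintype β] [DecidableEq α] [DecidableEq β]
    (ρ : Matrix (α × β) (α × β) ℂ) (hherm : ρ.IsHermitian)
    (a : α → α → ℂ) (b : β → β → ℂ) (e : α → β → ℝ)
    (ha : ∀ j j', ∑ i, star (a j i) * a j' i = if j = j' then 1 else 0)
    (hb : ∀ k k', ∑ i, star (b k i) * b k' i = if k = k' then 1 else 0)
    (hrep : ρ = ∑ j : α, ∑ k : β,
      (e j k : ℂ) • (vecMulVec (a j) (star (a j)) ⊗ₖ vecMulVec (b k) (star (b k))))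
    (η : ℝ) :
    eigProj ρ η = ∑ p ∈ univ.filter (fun p : α × β => e p.1 p.2 = η),
      vecMulVec (fun q : α × β => a p.1 q.1 * b p.2 q.2)
        (star fun q : α × β => a p.1 q.1 * b p.2 q.2) := by
  classical
  set w : α × β → α × β → ℂ := fun p q => a p.1 q.1 * b p.2 q.2 with hwdef
  have hw : ∀ p p', ∑ q, star (w p q) * w p' q = if p = p' then 1 else 0 := by
    rintro ⟨j, k⟩ ⟨j', k'⟩
    rw [Fintype.sum_prod_type]
    have step : (∑ i : α, ∑ l : β, star (w (j, k) (i, l)) * w (j', k') (i, l))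
        = (∑ i, star (a j i) * a j' i) * (∑ l, star (b k l) * b k' l) := by
      rw [Finset.sum_mul_sum]
      refine Finset.sum_congr rfl fun i _ => Finset.sum_congr rfl fun l _ => ?_
      simp only [w, star_mul']
      ring
    rw [step, ha, hb]
    by_cases h1 : j = j' <;> by_cases h2 : k = k' <;>
      simp [h1, h2, Prod.ext_iff]
  have hrw : ρ = ∑ p : α × β, (e p.1 p.2 : ℂ) • vecMulVec (w p) (star (w p)) := by
    rw [hrep, Fintype.sum_prod_type]
    refine Finset.sum_congr rfl fun j _ => Finset.sum_congr rfl fun k _ => ?_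
    congr 1
    ext ⟨i, l⟩ ⟨i', l'⟩
    simp only [Matrix.kroneckerMap_apply, vecMulVec_apply, Pi.star_apply, star_mul', w]
    ring
  have hcw : ∑ p, vecMulVec (w p) (star (w p)) = 1 := complete_of_ortho w hw
  have hρw : ∀ p, ρ *ᵥ w p = (e p.1 p.2 : ℂ) • w p := by
    intro p
    conv_lhs => rw [hrw]
    rw [sum_mulVec']
    have : ∀ q : α × β, ((e q.1 q.2 : ℂ) • vecMulVec (w q) (star (w q))) *ᵥ w p
        = if q = p then (e p.1 p.2 : ℂ) • w p else 0 := by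
      intro q
      rw [Matrix.smul_mulVec, vecMulVec_mulVec']
      have : (∑ i, (star (w q)) i * w p i) = if q = p then 1 else 0 := hw q p
      rw [this]
      by_cases hq : q = p
      · subst hq; simp
      · simp [hq]
    rw [Finset.sum_congr rfl fun q _ => this q, Finset.sum_ite_eq' univ p]
    simp
  set lam : (α × β) → ℝ := hherm.eigenvalues with hlamdef
  set v : (α × β) → (α × β) → ℂ := fun m q => hherm.eigenvectorBasis m q with hvdef
  have hv : ∀ m m', ∑ q, star (v m q) * v m' q = if m = m' then 1 else 0 := by
    intro m m'
    have horth := hherm.eigenvectorBasis.orthonormal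
    rw [orthonormal_iff_ite] at horth
    have h2 := horth m m'
    rw [PiLp.inner_apply] at h2
    simp only [RCLike.inner_apply, starRingEnd_apply] at h2
    rw [hvdef]
    rw [← h2]
    exact Finset.sum_congr rfl fun q _ => mul_comm _ _
  have hcv : ∑ m, vecMulVec (v m) (star (v m)) = 1 := complete_of_ortho v hv
  have hvlam : ∀ m, ρ *ᵥ v m = (lam m : ℂ) • v m := by
    intro m
    have h3 := hherm.mulVec_eigenvectorBasis m
    ext r
    have := congrFun h3 r
    simpa [v, lam, Complex.real_smul] using this
  have hsv : ∀ m p, lam m ≠ e p.1 p.2 → ∑ q, star (v m q) * w p q = 0 := by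
    intro m p hne
    set s := ∑ q, star (v m q) * w p q with hsdef
    have t1 : ∑ q, star (v m q) * (ρ *ᵥ w p) q = (e p.1 p.2 : ℂ) * s := by
      rw [hρw p, hsdef, Finset.mul_sum]
      exact Finset.sum_congr rfl fun q _ => by
        simp only [Pi.smul_apply, smul_eq_mul]; ring
    have t2 : ∑ q, star (v m q) * (ρ *ᵥ w p) q = (lam m : ℂ) * s := by
      calc ∑ q, star (v m q) * (ρ *ᵥ w p) q
          = ∑ q, ∑ r, star (v m q) * (ρ q r * w p r) := by
            refine Finset.sum_congr rfl fun q _ => ?_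
            simp only [Matrix.mulVec, dotProduct, Finset.mul_sum]
        _ = ∑ r, (∑ q, star (v m q) * ρ q r) * w p r := by
            rw [Finset.sum_comm]
            refine Finset.sum_congr rfl fun r _ => ?_
            rw [Finset.sum_mul]
            exact Finset.sum_congr rfl fun q _ => by ring
        _ = ∑ r, ((lam m : ℂ) * star (v m r)) * w p r := by
            refine Finset.sum_congr rfl fun r _ => ?_
            congr 1
            have hstep : ∑ q, star (v m q) * ρ q r = star ((ρ *ᵥ v m) r) := by
              simp only [Matrix.mulVec, dotProduct, star_sum, star_mul']
              refine Finset.sum_congr rfl fun q _ => ?_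
              have : ρ q r = star (ρ r q) := by
                conv_lhs => rw [← hherm]
                simp [Matrix.conjTranspose_apply]
              rw [this]
              ring
            rw [hstep, hvlam m]
            simp only [Pi.smul_apply, smul_eq_mul, star_mul', Complex.star_def,
              Complex.conj_ofReal]
        _ = (lam m : ℂ) * s := by
            rw [hsdef, Finset.mul_sum]
            exact Finset.sum_congr rfl fun r _ => by ring
    have hzero : ((lam m : ℂ) - (e p.1 p.2 : ℂ)) * s = 0 := by
      rw [sub_mul, ← t1, ← t2, sub_self]
    rcases mul_eq_zero.mp hzero with h | h
    · exfalso
      apply hne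
      have : (lam m : ℂ) = (e p.1 p.2 : ℂ) := sub_eq_zero.mp h
      exact_mod_cast this
    · exact h
  have hPw : ∀ p, (eigProj ρ η) *ᵥ w p = if e p.1 p.2 = η then w p else 0 := by
    intro p
    rw [eigProj, dif_pos hherm, sum_mulVec']
    have hterm : ∀ m, vecMulVec (fun q => hherm.eigenvectorBasis m q)
        (star fun q => hherm.eigenvectorBasis m q) *ᵥ w p
        = (∑ q, star (v m q) * w p q) • v m := by
      intro m
      rw [vecMulVec_mulVec']
      rfl
    rw [Finset.sum_congr rfl fun m _ => hterm m]
    by_cases hc : e p.1 p.2 = η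
    · rw [if_pos hc]
      have hwp : (w p : (α × β) → ℂ) = ∑ m, (∑ q, star (v m q) * w p q) • v m := by
        calc (w p : (α × β) → ℂ) = (1 : Matrix (α × β) (α × β) ℂ) *ᵥ w p :=
              (Matrix.one_mulVec _).symm
          _ = (∑ m, vecMulVec (v m) (star (v m))) *ᵥ w p := by rw [hcv]
          _ = ∑ m, vecMulVec (v m) (star (v m)) *ᵥ w p := sum_mulVec' _ _ _
          _ = ∑ m, (∑ q, star (v m q) * w p q) • v m :=
              Finset.sum_congr rfl fun m _ => by rw [vecMulVec_mulVec']; rfl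
      conv_rhs => rw [hwp]
      apply Finset.sum_subset (Finset.filter_subset _ _)
      intro m _ hm
      have hlm : lam m ≠ η := by
        simpa [hlamdef] using (fun h => hm (Finset.mem_filter.mpr ⟨Finset.mem_univ m, h⟩))
      rw [hsv m p (by rw [hc]; exact hlm)]
      simp
    · rw [if_neg hc]
      apply Finset.sum_eq_zero
      intro m hm
      have hlm : lam m = η := by
        have := (Finset.mem_filter.mp hm).2
        simpa [hlamdef] using this
      rw [hsv m p (by rw [hlm]; exact fun h => hc h.symm)]
      simp
  calc eigProj ρ η = eigProj ρ η * 1 := (Matrix.mul_one _).symm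
    _ = eigProj ρ η * ∑ p, vecMulVec (w p) (star (w p)) := by rw [hcw]
    _ = ∑ p, vecMulVec ((eigProj ρ η) *ᵥ w p) (star (w p)) := by
        rw [Finset.mul_sum]
        exact Finset.sum_congr rfl fun p _ => mul_vecMulVec' _ _ _
    _ = ∑ p, if e p.1 p.2 = η then vecMulVec (w p) (star (w p)) else 0 := by
        refine Finset.sum_congr rfl fun p _ => ?_
        rw [hPw p]
        split
        · rfl
        · ext i j; simp [vecMulVec_apply]
    _ = ∑ p ∈ univ.filter (fun p : α × β => e p.1 p.2 = η),
          vecMulVec (w p) (star (w p)) := (Finset.sum_filter _ _).symm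

lemma evals_mem {n : Type*} [Fintype n] [DecidableEq n] (d : n → ℝ) (v : n → n → ℂ)
    (hv : ∀ j j', ∑ i, star (v j i) * v j' i = if j = j' then 1 else 0) (i : n) :
    ∃ j, evalsR (∑ j, (d j : ℂ) • vecMulVec (v j) (star (v j))) i = d j := by
  classical
  set M : Matrix n n ℂ := ∑ j, (d j : ℂ) • vecMulVec (v j) (star (v j)) with hMdef
  have hM : M.IsHermitian := by
    unfold Matrix.IsHermitian
    rw [hMdef]
    rw [Matrix.conjTranspose_sum]
    refine Finset.sum_congr rfl fun j _ => ?_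
    rw [Matrix.conjTranspose_smul]
    congr 1
    · simp
    · ext r s
      simp only [Matrix.conjTranspose_apply, vecMulVec_apply, Pi.star_apply, star_mul']
      ring_nf
      simp [mul_comm]
  let V : Matrix n n ℂ := Matrix.of fun i j => v j i
  have h1 : Vᴴ * V = 1 := by
    ext j j'
    simpa [Matrix.mul_apply, V, Matrix.conjTranspose_apply, Matrix.one_apply] using hv j j'
  have h2 : V * Vᴴ = 1 := mul_eq_one_comm.mp h1
  have hrep : M = V * (Matrix.diagonal (fun j => (d j : ℂ)) * Vᴴ) := by
    ext r s
    rw [Matrix.mul_apply]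
    simp only [hMdef, Matrix.sum_apply, Matrix.smul_apply, vecMulVec_apply, Pi.star_apply,
      smul_eq_mul, Matrix.diagonal_mul, Matrix.conjTranspose_apply, V, Matrix.of_apply]
    exact Finset.sum_congr rfl fun j _ => by ring
  set lam : ℝ := hM.eigenvalues i with hlam
  have heval : evalsR M i = lam := by rw [evalsR, dif_pos hM]
  set u : n → ℂ := fun r => hM.eigenvectorBasis i r with hu
  have hMu : M *ᵥ u = (lam : ℂ) • u := by
    have := hM.mulVec_eigenvectorBasis i
    ext r
    have := congrFun this r
    simpa [u, Complex.real_smul] using this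
  have hune : u ≠ 0 := by
    intro h0
    have := hM.eigenvectorBasis.orthonormal.ne_zero i
    apply this
    ext r
    exact congrFun h0 r
  have hVM : Vᴴ * M = Matrix.diagonal (fun j => (d j : ℂ)) * Vᴴ := by
    rw [hrep, ← Matrix.mul_assoc, h1, Matrix.one_mul]
  set x : n → ℂ := Vᴴ *ᵥ u with hx
  have hdx : Matrix.diagonal (fun j => (d j : ℂ)) *ᵥ x = (lam : ℂ) • x := by
    rw [hx, Matrix.mulVec_mulVec, ← hVM, ← Matrix.mulVec_mulVec, hMu, Matrix.mulVec_smul]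
  have hxne : x ≠ 0 := by
    intro h0
    apply hune
    have : V *ᵥ x = V *ᵥ 0 := by rw [h0]
    rw [hx, Matrix.mulVec_mulVec, h2, Matrix.one_mulVec, Matrix.mulVec_zero] at this
    exact this
  obtain ⟨j, hj⟩ := Function.ne_iff.mp hxne
  refine ⟨j, ?_⟩
  have := congrFun hdx j
  rw [Matrix.mulVec_diagonal] at this
  simp only [Pi.smul_apply, smul_eq_mul] at this
  have hdj : (d j : ℂ) = (lam : ℂ) := mul_right_cancel₀ hj this
  rw [heval]
  exact (Complex.ofReal_inj.mp hdj).symm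


lemma nim_nat_mul (η : ℝ) (n : ℕ) : nim η (η * n) = η * n := by
  unfold nim
  by_cases hη : η = 0
  · simp [hη]
  · rw [if_neg hη]
    have h1 : (η * n) / η = (n : ℝ) := by field_simp
    rw [h1]
    simp

lemma Mterm_nat_mul (η T : ℝ) (n : ℕ) : Mterm η T (η * n) = 0 := by
  simp [Mterm, nim_nat_mul]

lemma evals_ptraceB {α β : Type*} [Fintype α] [Fintype β] [DecidableEq α] [DecidableEq β]
    (ρ : Matrix (α × β) (α × β) ℂ) (hherm : ρ.IsHermitian)
    (a : α → α → ℂ) (b : β → β → ℂ) (e : α → β → ℝ)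
    (ha : ∀ j j', ∑ i, star (a j i) * a j' i = if j = j' then 1 else 0)
    (hb : ∀ k k', ∑ i, star (b k i) * b k' i = if k = k' then 1 else 0)
    (hrep : ρ = ∑ j : α, ∑ k : β,
      (e j k : ℂ) • (vecMulVec (a j) (star (a j)) ⊗ₖ vecMulVec (b k) (star (b k))))
    (η : ℝ) (i : α) :
    ∃ m : ℕ, evalsR (ptraceB (trunc ρ η)) i = η * m := by
  classical
  have hP := eigProj_formula ρ hherm a b e ha hb hrep η
  set c : α → ℕ := fun j => (univ.filter fun k => e j k = η).card with hc
  have hbb : ∀ k, ∑ l, b k l * star (b k l) = 1 := by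
    intro k
    have h1 := hb k k
    rw [if_pos rfl] at h1
    rw [← h1]
    exact Finset.sum_congr rfl fun l _ => mul_comm _ _
  have hMA : ptraceB (trunc ρ η) = ∑ j : α, (((η * (c j : ℝ)) : ℝ) : ℂ) •
      vecMulVec (a j) (star (a j)) := by
    rw [trunc, hP]
    ext r s
    show ∑ l : β, ((η : ℂ) • ∑ p ∈ univ.filter (fun p : α × β => e p.1 p.2 = η),
        vecMulVec (fun q : α × β => a p.1 q.1 * b p.2 q.2)
          (star fun q : α × β => a p.1 q.1 * b p.2 q.2)) ((r, l)) ((s, l)) = _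
    calc ∑ l : β, ((η : ℂ) • ∑ p ∈ univ.filter (fun p : α × β => e p.1 p.2 = η),
        vecMulVec (fun q : α × β => a p.1 q.1 * b p.2 q.2)
          (star fun q : α × β => a p.1 q.1 * b p.2 q.2)) ((r, l)) ((s, l))
        = (η : ℂ) * ∑ p ∈ univ.filter (fun p : α × β => e p.1 p.2 = η),
            ∑ l : β, (a p.1 r * b p.2 l) * star (a p.1 s * b p.2 l) := by
          simp only [Matrix.smul_apply, Matrix.sum_apply, vecMulVec_apply, Pi.star_apply,
            smul_eq_mul]
          rw [← Finset.mul_sum, Finset.sum_comm]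
        _ = (η : ℂ) * ∑ p ∈ univ.filter (fun p : α × β => e p.1 p.2 = η),
            (a p.1 r * star (a p.1 s)) * ∑ l, b p.2 l * star (b p.2 l) := by
          congr 1
          refine Finset.sum_congr rfl fun p _ => ?_
          rw [Finset.mul_sum]
          refine Finset.sum_congr rfl fun l _ => ?_
          simp only [star_mul']
          ring
        _ = (η : ℂ) * ∑ p ∈ univ.filter (fun p : α × β => e p.1 p.2 = η),
            a p.1 r * star (a p.1 s) := by
          congr 1
          refine Finset.sum_congr rfl fun p _ => ?_
          rw [hbb p.2, mul_one]
        _ = (η : ℂ) * ∑ j : α, (c j : ℂ) * (a j r * star (a j s)) := by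
          congr 1
          rw [Finset.sum_filter, Fintype.sum_prod_type]
          refine Finset.sum_congr rfl fun j _ => ?_
          have hstep : (∑ _k ∈ filter (fun k => e j k = η) univ,
              a j r * star (a j s)) = (c j : ℂ) * (a j r * star (a j s)) := by
            rw [Finset.sum_const, hc]
            simp [mul_comm]
          rw [← hstep, ← Finset.sum_filter]
        _ = ∑ j : α, (((η * (c j : ℝ)) : ℝ) : ℂ) * (a j r * star (a j s)) := by
          rw [Finset.mul_sum]
          refine Finset.sum_congr rfl fun j _ => ?_
          push_cast
          ring
        _ = _ := by
          simp only [Matrix.sum_apply, Matrix.smul_apply, vecMulVec_apply, Pi.star_apply,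
            smul_eq_mul]
  obtain ⟨j, hj⟩ := evals_mem (fun j => η * (c j : ℝ)) a ha i
  rw [hMA]
  exact ⟨c j, hj⟩

lemma evals_ptraceA {α β : Type*} [Fintype α] [Fintype β] [DecidableEq α] [DecidableEq β]
    (ρ : Matrix (α × β) (α × β) ℂ) (hherm : ρ.IsHermitian)
    (a : α → α → ℂ) (b : β → β → ℂ) (e : α → β → ℝ)
    (ha : ∀ j j', ∑ i, star (a j i) * a j' i = if j = j' then 1 else 0)
    (hb : ∀ k k', ∑ i, star (b k i) * b k' i = if k = k' then 1 else 0)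
    (hrep : ρ = ∑ j : α, ∑ k : β,
      (e j k : ℂ) • (vecMulVec (a j) (star (a j)) ⊗ₖ vecMulVec (b k) (star (b k))))
    (η : ℝ) (i : β) :
    ∃ m : ℕ, evalsR (ptraceA (trunc ρ η)) i = η * m := by
  classical
  have hP := eigProj_formula ρ hherm a b e ha hb hrep η
  set c : β → ℕ := fun k => (univ.filter fun j => e j k = η).card with hc
  have haa : ∀ j, ∑ l, a j l * star (a j l) = 1 := by
    intro j
    have h1 := ha j j
    rw [if_pos rfl] at h1
    rw [← h1]
    exact Finset.sum_congr rfl fun l _ => mul_comm _ _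
  have hMB : ptraceA (trunc ρ η) = ∑ k : β, (((η * (c k : ℝ)) : ℝ) : ℂ) •
      vecMulVec (b k) (star (b k)) := by
    rw [trunc, hP]
    ext r s
    show ∑ l : α, ((η : ℂ) • ∑ p ∈ univ.filter (fun p : α × β => e p.1 p.2 = η),
        vecMulVec (fun q : α × β => a p.1 q.1 * b p.2 q.2)
          (star fun q : α × β => a p.1 q.1 * b p.2 q.2)) ((l, r)) ((l, s)) = _
    calc ∑ l : α, ((η : ℂ) • ∑ p ∈ univ.filter (fun p : α × β => e p.1 p.2 = η),
        vecMulVec (fun q : α × β => a p.1 q.1 * b p.2 q.2)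
          (star fun q : α × β => a p.1 q.1 * b p.2 q.2)) ((l, r)) ((l, s))
        = (η : ℂ) * ∑ p ∈ univ.filter (fun p : α × β => e p.1 p.2 = η),
            ∑ l : α, (a p.1 l * b p.2 r) * star (a p.1 l * b p.2 s) := by
          simp only [Matrix.smul_apply, Matrix.sum_apply, vecMulVec_apply, Pi.star_apply,
            smul_eq_mul]
          rw [← Finset.mul_sum, Finset.sum_comm]
        _ = (η : ℂ) * ∑ p ∈ univ.filter (fun p : α × β => e p.1 p.2 = η),
            (b p.2 r * star (b p.2 s)) * ∑ l, a p.1 l * star (a p.1 l) := by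
          congr 1
          refine Finset.sum_congr rfl fun p _ => ?_
          rw [Finset.mul_sum]
          refine Finset.sum_congr rfl fun l _ => ?_
          simp only [star_mul']
          ring
        _ = (η : ℂ) * ∑ p ∈ univ.filter (fun p : α × β => e p.1 p.2 = η),
            b p.2 r * star (b p.2 s) := by
          congr 1
          refine Finset.sum_congr rfl fun p _ => ?_
          rw [haa p.1, mul_one]
        _ = (η : ℂ) * ∑ k : β, (c k : ℂ) * (b k r * star (b k s)) := by
          congr 1
          rw [Finset.sum_filter, Fintype.sum_prod_type]
          rw [Finset.sum_comm]
          refine Finset.sum_congr rfl fun k _ => ?_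
          have hstep : (∑ _j ∈ filter (fun j => e j k = η) univ,
              b k r * star (b k s)) = (c k : ℂ) * (b k r * star (b k s)) := by
            rw [Finset.sum_const, hc]
            simp [mul_comm]
          rw [← hstep, ← Finset.sum_filter]
        _ = ∑ k : β, (((η * (c k : ℝ)) : ℝ) : ℂ) * (b k r * star (b k s)) := by
          rw [Finset.mul_sum]
          refine Finset.sum_congr rfl fun k _ => ?_
          push_cast
          ring
        _ = _ := by
          simp only [Matrix.sum_apply, Matrix.smul_apply, vecMulVec_apply, Pi.star_apply,
            smul_eq_mul]
  obtain ⟨k, hk⟩ := evals_mem (fun k => η * (c k : ℝ)) b hb i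
  rw [hMB]
  exact ⟨c k, hk⟩

/-- the measure `M` vanishes for any bipartite density matrix having a
product eigenbasis. -/
theorem Mmeas_eq_zero_of_hasProductEigenbasis
    {α β : Type*} [Fintype α] [Fintype β] [DecidableEq α] [DecidableEq β]
    (ρ : Matrix (α × β) (α × β) ℂ) (hρ : IsDensityMatrix ρ)
    (hpe : HasProductEigenbasis ρ) :
    Mmeas ρ = 0 := by
  classical
  obtain ⟨a, b, e, ha, hb, hrep⟩ := hpe
  have hherm : ρ.IsHermitian := hρ.1.1
  have hA : MmeasA ρ = 0 := by
    refine Finset.sum_eq_zero fun η _ => Finset.sum_eq_zero fun i _ => ?_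
    obtain ⟨m, hm⟩ := evals_ptraceB ρ hherm a b e ha hb hrep η i
    rw [hm]
    exact Mterm_nat_mul _ _ _
  have hB : MmeasB ρ = 0 := by
    refine Finset.sum_eq_zero fun η _ => Finset.sum_eq_zero fun i _ => ?_
    obtain ⟨m, hm⟩ := evals_ptraceA ρ hherm a b e ha hb hrep η i
    rw [hm]
    exact Mterm_nat_mul _ _ _
  rw [Mmeas, hA, hB]
  norm_num

end
end

section
/- For any density matrix ρ on an N×N-dimensional bipartite system (dim H_A = dim H_B = N), the measure M satisfies M(ρ) ≤ log₂ N. -/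
open Matrix Kronecker Finset
open scoped ComplexOrder

attribute [local instance] Classical.propDecidable

noncomputable section

/-! ### Auxiliary lemmas -/

section Aux

lemma abs_sub_nim_le {y x : ℝ} (hx : 0 ≤ x) (hy : 0 ≤ y) : |x - nim y x| ≤ x := by
  unfold nim
  rcases eq_or_lt_of_le hy with h0 | hy
  · simp [← h0, abs_of_nonneg hx]
  rw [if_neg hy.ne']
  have hfl : y * ⌊x / y⌋ ≤ x := by
    rw [mul_comm, ← le_div_iff₀ hy]
    exact Int.floor_le _
  have hfl0 : 0 ≤ y * ⌊x / y⌋ := by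
    apply mul_nonneg hy.le
    exact_mod_cast Int.floor_nonneg.mpr (div_nonneg hx hy.le)
  have hcl : x ≤ y * ⌈x / y⌉ := by
    rw [mul_comm, ← div_le_iff₀ hy]
    exact Int.le_ceil _
  split_ifs with h
  · rw [abs_of_nonneg (by linarith)]; linarith
  · push_neg at h
    rw [abs_of_nonpos (by linarith)]
    linarith

lemma nim_zero' (y : ℝ) : nim y 0 = 0 := by
  unfold nim
  rcases eq_or_ne y 0 with h | h <;> simp [h]

lemma entropy_le_log_card {n : Type*} [Fintype n] (lam : n → ℝ) (T : ℝ)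
    (hnn : ∀ i, 0 ≤ lam i) (hsum : ∑ i, lam i = T) :
    ∑ i, -(lam i * Real.log (lam i / T)) ≤ T * Real.log (Fintype.card n) := by
  rcases eq_or_lt_of_le (hsum ▸ Finset.sum_nonneg fun i _ => hnn i) with hT0 | hT
  · have hz : ∀ i ∈ Finset.univ, lam i = 0 := fun i _ =>
      (Finset.sum_eq_zero_iff_of_nonneg (fun j _ => hnn j)).mp (hsum.trans hT0.symm) i (mem_univ i)
    rw [← hT0]
    calc ∑ i, -(lam i * Real.log (lam i / 0)) = 0 := by
          apply Finset.sum_eq_zero; intro i _; rw [hz i (mem_univ i)]; simp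
      _ ≤ 0 * Real.log (Fintype.card n) := by simp
  · have hcard : 0 < (Fintype.card n : ℝ) := by
      have : Nonempty n := by
        by_contra h
        rw [not_nonempty_iff] at h
        rw [Finset.univ_eq_empty, Finset.sum_empty] at hsum
        linarith
      exact_mod_cast Fintype.card_pos
    have key : ∀ i, -(lam i * Real.log (lam i / T))
        ≤ T / Fintype.card n - lam i + lam i * Real.log (Fintype.card n) := by
      intro i
      rcases eq_or_lt_of_le (hnn i) with h0 | hpos
      · rw [← h0]; simp; positivity
      · have h1 : -(lam i * Real.log (lam i / T)) = lam i * Real.log (T / lam i) := by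
          rw [show T / lam i = (lam i / T)⁻¹ by rw [inv_div], Real.log_inv]; ring
        rw [h1]
        have h2 : Real.log (T / lam i)
            = Real.log (T / (Fintype.card n * lam i)) + Real.log (Fintype.card n) := by
          rw [← Real.log_mul (by positivity) (by positivity)]
          congr 1; field_simp
        rw [h2, mul_add]
        have h3 : Real.log (T / (Fintype.card n * lam i)) ≤ T / (Fintype.card n * lam i) - 1 :=
          Real.log_le_sub_one_of_pos (by positivity)
        have h4 : lam i * Real.log (T / (Fintype.card n * lam i)) ≤ T / Fintype.card n - lam i := by
          calc lam i * Real.log (T / (Fintype.card n * lam i))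
              ≤ lam i * (T / (Fintype.card n * lam i) - 1) :=
                mul_le_mul_of_nonneg_left h3 hpos.le
            _ = T / Fintype.card n - lam i := by field_simp
        linarith
    calc ∑ i, -(lam i * Real.log (lam i / T))
        ≤ ∑ i : n, (T / Fintype.card n - lam i + lam i * Real.log (Fintype.card n)) :=
          Finset.sum_le_sum fun i _ => key i
      _ = T * Real.log (Fintype.card n) := by
          rw [Finset.sum_add_distrib, Finset.sum_sub_distrib, ← Finset.sum_mul, hsum]
          rw [Finset.sum_const, nsmul_eq_mul, ← Fintype.card]
          field_simp
          ring

lemma Mterm_sum_le {n : Type*} [Fintype n] (eta T : ℝ) (heta : 0 ≤ eta) (lam : n → ℝ)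
    (hnn : ∀ i, 0 ≤ lam i) (hsum : ∑ i, lam i = T) :
    ∑ i, Mterm eta T (lam i) ≤ T * Real.logb 2 (Fintype.card n) := by
  have hT : 0 ≤ T := hsum ▸ Finset.sum_nonneg fun i _ => hnn i
  have hlog2 : (0:ℝ) < Real.log 2 := Real.log_pos (by norm_num)
  have step1 : ∀ i, Mterm eta T (lam i) ≤ -(lam i * Real.logb 2 (lam i / T)) := by
    intro i
    rcases eq_or_lt_of_le (hnn i) with h0 | hpos
    · rw [← h0]; simp [Mterm, nim_zero']
    · have hle : lam i ≤ T := hsum ▸ Finset.single_le_sum (fun j _ => hnn j) (mem_univ i)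
      have hL : Real.logb 2 (lam i / T) ≤ 0 :=
        Real.logb_nonpos one_lt_two (by positivity)
          ((div_le_one (lt_of_lt_of_le hpos hle)).mpr hle)
      have hA := abs_sub_nim_le (hnn i) heta
      have hA0 := abs_nonneg (lam i - nim eta (lam i))
      unfold Mterm
      nlinarith
  calc ∑ i, Mterm eta T (lam i) ≤ ∑ i, -(lam i * Real.logb 2 (lam i / T)) :=
        Finset.sum_le_sum fun i _ => step1 i
    _ = (∑ i, -(lam i * Real.log (lam i / T))) / Real.log 2 := by
        rw [Finset.sum_div]
        exact Finset.sum_congr rfl fun i _ => by rw [Real.logb]; ring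
    _ ≤ (T * Real.log (Fintype.card n)) / Real.log 2 :=
        div_le_div_of_nonneg_right (entropy_le_log_card lam T hnn hsum) hlog2.le
    _ = T * Real.logb 2 (Fintype.card n) := by rw [Real.logb]; ring

end Aux

section MatrixAux

lemma trace_eq_sum_eig {n : Type*} [Fintype n] [DecidableEq n] {A : Matrix n n ℂ}
    (hA : A.IsHermitian) : A.trace = ∑ i, (hA.eigenvalues i : ℂ) := by
  conv_lhs => rw [hA.spectral_theorem]
  rw [Unitary.conjStarAlgAut_apply, Matrix.trace_mul_cycle]
  have h1 : (star (hA.eigenvectorUnitary : Matrix n n ℂ)) * (hA.eigenvectorUnitary : Matrix n n ℂ)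
      = 1 := ((Unitary.mem_iff).mp hA.eigenvectorUnitary.2).1
  rw [h1, one_mul, Matrix.trace_diagonal]
  rfl

lemma dot_embB {α β : Type*} [Fintype α] [Fintype β] [DecidableEq β]
    (ρ : Matrix (α × β) (α × β) ℂ) (x : α → ℂ) (b : β) :
    dotProduct (star (fun p : α × β => if p.2 = b then x p.1 else 0))
        (ρ *ᵥ (fun p : α × β => if p.2 = b then x p.1 else 0))
      = ∑ a, ∑ a', star (x a) * (ρ (a, b) (a', b) * x a') := by
  simp only [dotProduct, mulVec, Pi.star_apply, apply_ite (star : ℂ → ℂ), star_zero]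
  rw [Fintype.sum_prod_type]
  simp only [ite_mul, zero_mul, Finset.sum_ite_eq', Finset.mem_univ, if_true]
  refine Finset.sum_congr rfl fun a _ => ?_
  rw [Finset.mul_sum, Fintype.sum_prod_type]
  refine Finset.sum_congr rfl fun a' _ => ?_
  simp only [mul_ite, mul_zero, Finset.sum_ite_eq', Finset.mem_univ, if_true]

lemma dot_embA {α β : Type*} [Fintype α] [Fintype β] [DecidableEq α]
    (ρ : Matrix (α × β) (α × β) ℂ) (x : β → ℂ) (a : α) :
    dotProduct (star (fun p : α × β => if p.1 = a then x p.2 else 0))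
        (ρ *ᵥ (fun p : α × β => if p.1 = a then x p.2 else 0))
      = ∑ b, ∑ b', star (x b) * (ρ (a, b) (a, b') * x b') := by
  simp only [dotProduct, mulVec, Pi.star_apply, apply_ite (star : ℂ → ℂ), star_zero]
  rw [Fintype.sum_prod_type_right]
  simp only [ite_mul, zero_mul, Finset.sum_ite_eq', Finset.mem_univ, if_true]
  refine Finset.sum_congr rfl fun b _ => ?_
  rw [Finset.mul_sum, Fintype.sum_prod_type_right]
  refine Finset.sum_congr rfl fun b' _ => ?_
  simp only [mul_ite, mul_zero, Finset.sum_ite_eq', Finset.mem_univ, if_true]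

lemma ptraceB_posSemidef {α β : Type*} [Fintype α] [Fintype β] [DecidableEq β]
    {ρ : Matrix (α × β) (α × β) ℂ} (h : ρ.PosSemidef) : (ptraceB ρ).PosSemidef := by
  rw [posSemidef_iff_dotProduct_mulVec]
  constructor
  · ext a a'
    simp only [conjTranspose_apply, ptraceB, star_sum]
    exact Finset.sum_congr rfl fun b _ => congrFun (congrFun h.1 (a,b)) (a',b)
  · intro x
    have key : dotProduct (star x) (ptraceB ρ *ᵥ x)
        = ∑ b : β, ∑ a, ∑ a', star (x a) * (ρ (a, b) (a', b) * x a') := by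
      simp only [dotProduct, mulVec, ptraceB, Pi.star_apply, Finset.sum_mul, Finset.mul_sum]
      exact (Finset.sum_congr rfl fun a _ => Finset.sum_comm).trans Finset.sum_comm
    rw [key]
    exact Finset.sum_nonneg fun b _ => by
      rw [← dot_embB ρ x b]; exact h.dotProduct_mulVec_nonneg _

lemma ptraceA_posSemidef {α β : Type*} [Fintype α] [Fintype β] [DecidableEq α]
    {ρ : Matrix (α × β) (α × β) ℂ} (h : ρ.PosSemidef) : (ptraceA ρ).PosSemidef := by
  rw [posSemidef_iff_dotProduct_mulVec]
  constructor
  · ext b b'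
    simp only [conjTranspose_apply, ptraceA, star_sum]
    exact Finset.sum_congr rfl fun a _ => congrFun (congrFun h.1 (a,b)) (a,b')
  · intro x
    have key : dotProduct (star x) (ptraceA ρ *ᵥ x)
        = ∑ a : α, ∑ b, ∑ b', star (x b) * (ρ (a, b) (a, b') * x b') := by
      simp only [dotProduct, mulVec, ptraceA, Pi.star_apply, Finset.sum_mul, Finset.mul_sum]
      exact (Finset.sum_congr rfl fun a _ => Finset.sum_comm).trans Finset.sum_comm
    rw [key]
    exact Finset.sum_nonneg fun a _ => by
      rw [← dot_embA ρ x a]; exact h.dotProduct_mulVec_nonneg _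

lemma trace_ptraceB {α β : Type*} [Fintype α] [Fintype β]
    (ρ : Matrix (α × β) (α × β) ℂ) : (ptraceB ρ).trace = ρ.trace := by
  simp only [Matrix.trace, Matrix.diag, ptraceB]
  rw [Fintype.sum_prod_type]

lemma trace_ptraceA {α β : Type*} [Fintype α] [Fintype β]
    (ρ : Matrix (α × β) (α × β) ℂ) : (ptraceA ρ).trace = ρ.trace := by
  simp only [Matrix.trace, Matrix.diag, ptraceA]
  rw [Fintype.sum_prod_type, Finset.sum_comm]

lemma vecMulVec_star_posSemidef {n : Type*} [Fintype n] (v : n → ℂ) :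
    (vecMulVec v (star v)).PosSemidef := by
  rw [posSemidef_iff_dotProduct_mulVec]
  constructor
  · ext i j
    simp [vecMulVec, conjTranspose_apply, mul_comm]
  · intro x
    have key : dotProduct (star x) (vecMulVec v (star v) *ᵥ x)
        = star (dotProduct (star v) x) * (dotProduct (star v) x) := by
      simp only [dotProduct, mulVec, vecMulVec, Pi.star_apply, star_sum, star_mul',
        star_star, Finset.sum_mul, Finset.mul_sum, of_apply]
      rw [Finset.sum_comm]
      refine Finset.sum_congr rfl fun i _ => Finset.sum_congr rfl fun j _ => by ring
    rw [key]
    exact star_mul_self_nonneg _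

lemma trace_vecMulVec' {n : Type*} [Fintype n] (v : n → ℂ) :
    (vecMulVec v (star v)).trace = ∑ i, star (v i) * v i := by
  simp [Matrix.trace, Matrix.diag, vecMulVec, mul_comm]

lemma eigProj_posSemidef {n : Type*} [Fintype n] [DecidableEq n] (ρ : Matrix n n ℂ) (η : ℝ) :
    (eigProj ρ η).PosSemidef := by
  unfold eigProj
  split_ifs with h
  · exact Finset.sum_induction _ _ (fun a b ha hb => ha.add hb) Matrix.PosSemidef.zero
      (fun k _ => vecMulVec_star_posSemidef _)
  · exact Matrix.PosSemidef.zero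

lemma trace_eigProj {n : Type*} [Fintype n] [DecidableEq n] (ρ : Matrix n n ℂ) (η : ℝ) :
    (eigProj ρ η).trace = (dimEig ρ η : ℂ) := by
  unfold eigProj dimEig
  split_ifs with h
  · rw [Matrix.trace_sum]
    rw [Finset.sum_congr rfl (fun k _ => trace_vecMulVec' _)]
    have hone : ∀ k : n, ∑ i, star (h.eigenvectorBasis k i) * (h.eigenvectorBasis k i) = 1 := by
      intro k
      have h1 : (inner ℂ (h.eigenvectorBasis k) (h.eigenvectorBasis k) : ℂ)
          = ∑ i, star (h.eigenvectorBasis k i) * (h.eigenvectorBasis k i) := by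
        rw [PiLp.inner_apply]
        exact Finset.sum_congr rfl fun i _ => RCLike.inner_apply' _ _
      rw [← h1, inner_self_eq_norm_sq_to_K, h.eigenvectorBasis.orthonormal.1 k]
      norm_num
    rw [Finset.sum_congr rfl (fun k _ => hone k)]
    simp
  · simp

lemma trunc_posSemidef {n : Type*} [Fintype n] [DecidableEq n] (ρ : Matrix n n ℂ) {η : ℝ}
    (hη : 0 ≤ η) : (trunc ρ η).PosSemidef := by
  have hP := eigProj_posSemidef ρ η
  rw [posSemidef_iff_dotProduct_mulVec]
  constructor
  · ext i j
    simp only [trunc, conjTranspose_apply, Matrix.smul_apply, star_mul', smul_eq_mul]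
    rw [show star ((η : ℂ)) = (η : ℂ) by simp [Complex.ext_iff]]
    have h2 := congrFun (congrFun hP.1 i) j
    rw [Matrix.conjTranspose_apply] at h2
    rw [h2]
  · intro x
    have h3 : dotProduct (star x) (trunc ρ η *ᵥ x)
        = (η : ℂ) * dotProduct (star x) (eigProj ρ η *ᵥ x) := by
      simp [trunc, smul_mulVec, dotProduct_smul]
    rw [h3]
    exact mul_nonneg (by exact_mod_cast Complex.zero_le_real.mpr hη) (hP.dotProduct_mulVec_nonneg x)

lemma trace_trunc {n : Type*} [Fintype n] [DecidableEq n] (ρ : Matrix n n ℂ) (η : ℝ) :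
    (trunc ρ η).trace = ((η * dimEig ρ η : ℝ) : ℂ) := by
  simp only [trunc, Matrix.trace_smul, smul_eq_mul, trace_eigProj]
  push_cast
  ring

lemma evalsR_nonneg {n : Type*} [Fintype n] [DecidableEq n] {A : Matrix n n ℂ}
    (hA : A.PosSemidef) (i : n) : 0 ≤ evalsR A i := by
  unfold evalsR
  rw [dif_pos hA.1]
  exact hA.eigenvalues_nonneg i

lemma sum_evalsR {n : Type*} [Fintype n] [DecidableEq n] {A : Matrix n n ℂ} {t : ℝ}
    (hA : A.IsHermitian) (ht : A.trace = (t : ℂ)) : ∑ i, evalsR A i = t := by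
  have h1 : A.trace = ((∑ i, evalsR A i : ℝ) : ℂ) := by
    rw [trace_eq_sum_eig hA]
    push_cast
    refine Finset.sum_congr rfl fun i _ => ?_
    unfold evalsR
    rw [dif_pos hA]
  rw [ht] at h1
  exact_mod_cast h1.symm

end MatrixAux

/-- for any density matrix on an `N × N`-dimensional bipartite system,
`M(ρ) ≤ log₂ N`. -/
theorem Mmeas_le_logb_dim
    (N : ℕ) (ρ : Matrix (Fin N × Fin N) (Fin N × Fin N) ℂ)
    (hρ : IsDensityMatrix ρ) :
    Mmeas ρ ≤ Real.logb 2 (N : ℝ) := by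
  obtain ⟨hpsd, htr⟩ := hρ
  have hherm : ρ.IsHermitian := hpsd.1
  set s := Finset.image (evalsR ρ) univ with hs
  have hη0 : ∀ η ∈ s, (0:ℝ) ≤ η := by
    intro η hη
    obtain ⟨k, _, hk⟩ := Finset.mem_image.mp hη
    exact hk ▸ evalsR_nonneg hpsd k
  have hsum1 : ∑ η ∈ s, η * (dimEig ρ η : ℝ) = 1 := by
    have he : evalsR ρ = hherm.eigenvalues := dif_pos hherm
    have h1 : ∑ k, evalsR ρ k = 1 := sum_evalsR hherm (by exact_mod_cast htr)
    rw [← h1]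
    rw [Finset.sum_comp (fun x : ℝ => x) (evalsR ρ)]
    refine (Finset.sum_congr rfl fun η _ => ?_).symm
    rw [nsmul_eq_mul, mul_comm]
    congr 1
    unfold dimEig
    rw [dif_pos hherm, he]
  have hA : ∀ η ∈ s, ∑ i : Fin N, Mterm η (η * (dimEig ρ η : ℝ)) (evalsR (ptraceB (trunc ρ η)) i)
      ≤ (η * (dimEig ρ η : ℝ)) * Real.logb 2 (N : ℝ) := by
    intro η hη
    have hη' := hη0 η hη
    have hσ : (ptraceB (trunc ρ η)).PosSemidef := ptraceB_posSemidef (trunc_posSemidef ρ hη')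
    have hσtr : (ptraceB (trunc ρ η)).trace = ((η * (dimEig ρ η : ℝ) : ℝ) : ℂ) := by
      rw [trace_ptraceB, trace_trunc]
    have key := Mterm_sum_le η (η * (dimEig ρ η : ℝ)) hη' (evalsR (ptraceB (trunc ρ η)))
      (evalsR_nonneg hσ) (sum_evalsR hσ.1 hσtr)
    simpa using key
  have hB : ∀ η ∈ s, ∑ i : Fin N, Mterm η (η * (dimEig ρ η : ℝ)) (evalsR (ptraceA (trunc ρ η)) i)
      ≤ (η * (dimEig ρ η : ℝ)) * Real.logb 2 (N : ℝ) := by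
    intro η hη
    have hη' := hη0 η hη
    have hσ : (ptraceA (trunc ρ η)).PosSemidef := ptraceA_posSemidef (trunc_posSemidef ρ hη')
    have hσtr : (ptraceA (trunc ρ η)).trace = ((η * (dimEig ρ η : ℝ) : ℝ) : ℂ) := by
      rw [trace_ptraceA, trace_trunc]
    have key := Mterm_sum_le η (η * (dimEig ρ η : ℝ)) hη' (evalsR (ptraceA (trunc ρ η)))
      (evalsR_nonneg hσ) (sum_evalsR hσ.1 hσtr)
    simpa using key
  have hMA : MmeasA ρ ≤ Real.logb 2 (N : ℝ) := by
    unfold MmeasA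
    calc ∑ η ∈ s, ∑ i : Fin N, Mterm η (η * (dimEig ρ η : ℝ)) (evalsR (ptraceB (trunc ρ η)) i)
        ≤ ∑ η ∈ s, (η * (dimEig ρ η : ℝ)) * Real.logb 2 (N : ℝ) := Finset.sum_le_sum hA
      _ = Real.logb 2 (N : ℝ) := by rw [← Finset.sum_mul, hsum1, one_mul]
  have hMB : MmeasB ρ ≤ Real.logb 2 (N : ℝ) := by
    unfold MmeasB
    calc ∑ η ∈ s, ∑ i : Fin N, Mterm η (η * (dimEig ρ η : ℝ)) (evalsR (ptraceA (trunc ρ η)) i)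
        ≤ ∑ η ∈ s, (η * (dimEig ρ η : ℝ)) * Real.logb 2 (N : ℝ) := Finset.sum_le_sum hB
      _ = Real.logb 2 (N : ℝ) := by rw [← Finset.sum_mul, hsum1, one_mul]
  unfold Mmeas
  linarith


end
end

section
/- For a pure bipartite state |φ⟩⟨φ|, the measure M vanishes if and only if |φ⟩ is a product state (Schmidt rank 1). In particular, M(|φ⟩⟨φ|) > 0 for every entangled pure state. -/
open Matrix Kronecker Finset
open scoped ComplexOrder

attribute [local instance] Classical.propDecidable

noncomputable section

section Aux
set_option linter.unusedSectionVars false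

variable {n : Type*} [Fintype n] [DecidableEq n] {A : Matrix n n ℂ}

lemma rank_one_spectral (h : A.IsHermitian) :
    A = ∑ k, (h.eigenvalues k : ℂ) •
      vecMulVec (fun i => h.eigenvectorBasis k i) (star fun i => h.eigenvectorBasis k i) := by
  conv_lhs => rw [h.spectral_theorem]
  ext i j
  simp [mul_apply, diagonal, vecMulVec, Matrix.sum_apply, smul_eq_mul, mul_comm, mul_assoc,
    mul_left_comm]

lemma trace_eq_sum_evals (h : A.IsHermitian) :
    A.trace = ∑ k, (h.eigenvalues k : ℂ) := by
  conv_lhs => rw [h.spectral_theorem]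
  rw [Unitary.conjStarAlgAut_apply]
  rw [trace_mul_comm, ← mul_assoc]
  rw [(Matrix.mem_unitaryGroup_iff').mp (h.eigenvectorUnitary).2]
  simp [trace, diagonal]

lemma evals_idem (h : A.IsHermitian) (hid : A * A = A) (k : n) :
    h.eigenvalues k = 0 ∨ h.eigenvalues k = 1 := by
  have hv := h.mulVec_eigenvectorBasis k
  have h2 : A *ᵥ A *ᵥ ⇑(h.eigenvectorBasis k)
      = (h.eigenvalues k * h.eigenvalues k) • ⇑(h.eigenvectorBasis k) := by
    rw [hv, mulVec_smul, hv, smul_smul]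
  rw [mulVec_mulVec, hid, hv] at h2
  have hne : ⇑(h.eigenvectorBasis k) ≠ 0 := by
    have := h.eigenvectorBasis.orthonormal.ne_zero k
    intro hc; apply this; ext i; exact congrFun hc i
  have h3 : (h.eigenvalues k - h.eigenvalues k * h.eigenvalues k) • ⇑(h.eigenvectorBasis k) = 0 := by
    rw [sub_smul, h2, sub_self]
  rcases smul_eq_zero.mp h3 with h0 | h0
  · rcases mul_eq_zero.mp (show h.eigenvalues k * (1 - h.eigenvalues k) = 0 by linarith) with h1 | h1
    · exact Or.inl h1
    · exact Or.inr (by linarith)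
  · exact absurd h0 hne

lemma nim_one_le_half {c : ℝ} (h0 : 0 ≤ c) (h : c ≤ 1/2) : nim 1 c = 0 := by
  have hfl : ⌊c⌋ = 0 := Int.floor_eq_zero_iff.mpr ⟨h0, by linarith⟩
  rcases eq_or_lt_of_le h0 with h0' | h0'
  · have : ⌈c⌉ = 0 := by rw [← h0']; exact Int.ceil_zero
    simp [nim, hfl, this, ← h0']
  · have hcl : ⌈c⌉ = 1 := by
      rw [Int.ceil_eq_iff]; push_cast; constructor <;> linarith
    simp only [nim, one_ne_zero, if_false, div_one, hfl, hcl, Int.cast_zero, Int.cast_one,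
      mul_zero, mul_one, sub_zero]
    rw [if_pos (by linarith)]

lemma nim_one_gt_half {c : ℝ} (h : 1/2 < c) (h1 : c ≤ 1) : nim 1 c = 1 := by
  rcases eq_or_lt_of_le h1 with h1' | h1'
  · subst h1'; simp [nim]
  · have hfl : ⌊c⌋ = 0 := Int.floor_eq_zero_iff.mpr ⟨by linarith, by simpa⟩
    have hcl : ⌈c⌉ = 1 := by
      rw [Int.ceil_eq_iff]; push_cast; constructor <;> linarith
    simp only [nim, one_ne_zero, if_false, div_one, hfl, hcl, Int.cast_zero, Int.cast_one,
      mul_zero, mul_one, sub_zero]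
    rw [if_neg (by push_neg; linarith)]

lemma Mterm_one_nonneg {c : ℝ} (h0 : 0 ≤ c) (h1 : c ≤ 1) : 0 ≤ Mterm 1 1 c := by
  have hlog : Real.logb 2 c ≤ 0 := Real.logb_nonpos (by norm_num) h0 h1
  rw [Mterm, div_one, neg_nonneg]
  exact mul_nonpos_of_nonneg_of_nonpos (abs_nonneg _) hlog

lemma Mterm_one_pos {c : ℝ} (h0 : 0 < c) (h1 : c < 1) : 0 < Mterm 1 1 c := by
  have hlog : Real.logb 2 c < 0 := Real.logb_neg (by norm_num) h0 h1
  rw [Mterm, div_one, neg_pos]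
  apply mul_neg_of_pos_of_neg _ hlog
  rw [abs_pos]
  by_cases hc : c ≤ 1/2
  · rw [nim_one_le_half h0.le hc]; simpa using h0.ne'
  · rw [nim_one_gt_half (by linarith) h1.le]; intro hc'; linarith [sub_eq_zero.mp hc']

lemma Mterm_one_of_mem {c : ℝ} (h : c = 0 ∨ c = 1) : Mterm 1 1 c = 0 := by
  rcases h with h | h <;> subst h
  · simp [Mterm, nim]
  · rw [Mterm, nim_one_gt_half (by norm_num) le_rfl]; simp

lemma Mterm_zero (T : ℝ) : Mterm 0 T 0 = 0 := by simp [Mterm, nim]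

lemma evalsR_zero (i : n) : evalsR (0 : Matrix n n ℂ) i = 0 := by
  have h : (0 : Matrix n n ℂ).IsHermitian := isHermitian_zero
  rw [evalsR, dif_pos h]
  have hv := h.mulVec_eigenvectorBasis i
  rw [zero_mulVec] at hv
  have hne : ⇑(h.eigenvectorBasis i) ≠ 0 := by
    have := h.eigenvectorBasis.orthonormal.ne_zero i
    intro hc; apply this; ext j; exact congrFun hc j
  rcases smul_eq_zero.mp hv.symm with h0 | h0
  · exact h0
  · exact absurd h0 hne

lemma sum_evals_eq_one (h : A.IsHermitian) (htr : A.trace = 1) :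
    ∑ k, h.eigenvalues k = 1 := by
  have := trace_eq_sum_evals h
  rw [htr] at this
  have : ((∑ k, h.eigenvalues k : ℝ) : ℂ) = ((1 : ℝ) : ℂ) := by push_cast; rw [← this]
  exact_mod_cast this

lemma card_filter_one (h : A.IsHermitian) (hev : ∀ k, h.eigenvalues k = 0 ∨ h.eigenvalues k = 1)
    (htr : A.trace = 1) :
    (univ.filter (fun k => h.eigenvalues k = (1:ℝ))).card = 1 := by
  have hsum := sum_evals_eq_one h htr
  have : ∑ k, h.eigenvalues k = ∑ k, (if h.eigenvalues k = (1:ℝ) then (1:ℝ) else 0) := by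
    apply Finset.sum_congr rfl
    intro k _
    rcases hev k with h0 | h0 <;> simp [h0]
  rw [this, Finset.sum_boole] at hsum
  exact_mod_cast hsum

lemma eigProj_one (h : A.IsHermitian) (hev : ∀ k, h.eigenvalues k = 0 ∨ h.eigenvalues k = 1) :
    eigProj A 1 = A := by
  rw [eigProj, dif_pos h]
  conv_rhs => rw [rank_one_spectral h]
  rw [← Finset.sum_subset (Finset.filter_subset (fun k => h.eigenvalues k = (1:ℝ)) univ)]
  · apply Finset.sum_congr rfl
    intro k hk
    rw [Finset.mem_filter] at hk
    rw [hk.2]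
    norm_num
  · intro k _ hk
    simp only [Finset.mem_filter, Finset.mem_univ, true_and] at hk
    rcases hev k with h0 | h0
    · rw [h0]; norm_num
    · exact absurd h0 hk

lemma mem_image_one (h : A.IsHermitian) (hev : ∀ k, h.eigenvalues k = 0 ∨ h.eigenvalues k = 1)
    (htr : A.trace = 1) :
    (1:ℝ) ∈ Finset.image (evalsR A) univ := by
  have hc := card_filter_one h hev htr
  obtain ⟨k, hk⟩ := Finset.card_eq_one.mp hc
  have : k ∈ ({k} : Finset n) := Finset.mem_singleton_self k
  rw [← hk, Finset.mem_filter] at this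
  rw [Finset.mem_image]
  exact ⟨k, Finset.mem_univ k, by rw [evalsR, dif_pos h]; exact this.2⟩

/-- reduction of one side of the measure for pure states -/
lemma Mmeas_reduce {γ : Type*} [Fintype γ] [DecidableEq γ]
    (hA : A.IsHermitian) (hid : A * A = A) (htr : A.trace = 1)
    (F : Matrix n n ℂ → Matrix γ γ ℂ) (hF : F 0 = 0) :
    ∑ η ∈ Finset.image (evalsR A) univ, ∑ i : γ,
      Mterm η (η * (dimEig A η : ℝ)) (evalsR (F (trunc A η)) i)
    = ∑ i : γ, Mterm 1 1 (evalsR (F A) i) := by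
  have hev := evals_idem hA hid
  rw [Finset.sum_eq_single_of_mem 1 (mem_image_one hA hev htr)]
  · have hd : dimEig A 1 = 1 := by rw [dimEig, dif_pos hA]; exact card_filter_one hA hev htr
    have ht : trunc A 1 = A := by rw [trunc, eigProj_one hA hev]; norm_num
    rw [hd, ht]
    norm_num
  · intro η hη hne
    rw [Finset.mem_image] at hη
    obtain ⟨k, _, hk⟩ := hη
    have hη0 : η = 0 := by
      rw [evalsR, dif_pos hA] at hk
      rcases hev k with h0 | h0
      · rw [← hk, h0]
      · exact absurd (hk ▸ h0) hne
    subst hη0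
    have ht0 : trunc A 0 = 0 := by rw [trunc]; simp
    rw [ht0, hF]
    apply Finset.sum_eq_zero
    intro i _
    rw [evalsR_zero i, Mterm_zero]

/-- the purely real-analytic part -/
lemma aux_sum {γ : Type*} [Fintype γ] (d : γ → ℝ) (h0 : ∀ i, 0 ≤ d i) (h1 : ∑ i, d i = 1) :
    0 ≤ ∑ i, Mterm 1 1 (d i) ∧
      ((∑ i, Mterm 1 1 (d i)) = 0 ↔ ∀ i, d i = 0 ∨ d i = 1) := by
  have hle : ∀ i, d i ≤ 1 := by
    intro i
    rw [← h1]
    exact Finset.single_le_sum (fun j _ => h0 j) (Finset.mem_univ i)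
  have hnn : ∀ i ∈ univ, 0 ≤ Mterm 1 1 (d i) := fun i _ => Mterm_one_nonneg (h0 i) (hle i)
  refine ⟨Finset.sum_nonneg hnn, ?_, ?_⟩
  · intro hz i
    have := (Finset.sum_eq_zero_iff_of_nonneg hnn).mp hz i (Finset.mem_univ i)
    by_contra hc
    push_neg at hc
    have := Mterm_one_pos (lt_of_le_of_ne (h0 i) (Ne.symm hc.1)) (lt_of_le_of_ne (hle i) hc.2)
    linarith
  · intro hall
    exact Finset.sum_eq_zero fun i _ => Mterm_one_of_mem (hall i)

lemma herm_pure {m : Type*} [Fintype m] (ψ : m → ℂ) : (vecMulVec ψ (star ψ)).IsHermitian := by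
  ext i j
  simp [conjTranspose_apply, vecMulVec_apply, mul_comm]

lemma pure_idem {m : Type*} [Fintype m] (ψ : m → ℂ) (h : ∑ p, star (ψ p) * ψ p = 1) :
    vecMulVec ψ (star ψ) * vecMulVec ψ (star ψ) = vecMulVec ψ (star ψ) := by
  ext i j
  simp only [mul_apply, vecMulVec_apply, Pi.star_apply]
  have : ∀ k, ψ i * star (ψ k) * (ψ k * star (ψ j))
      = (star (ψ k) * ψ k) * (ψ i * star (ψ j)) := fun k => by ring
  rw [Finset.sum_congr rfl (fun k _ => this k), ← Finset.sum_mul, h, one_mul]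

lemma trace_pure {m : Type*} [Fintype m] [DecidableEq m] (ψ : m → ℂ)
    (h : ∑ p, star (ψ p) * ψ p = 1) : (vecMulVec ψ (star ψ)).trace = 1 := by
  rw [trace]
  simp only [diag_apply, vecMulVec_apply, Pi.star_apply]
  rw [← h]
  exact Finset.sum_congr rfl fun p _ => mul_comm _ _

variable {α β : Type*} [Fintype α] [Fintype β] [DecidableEq α] [DecidableEq β]

lemma ptraceB_zero : ptraceB (0 : Matrix (α × β) (α × β) ℂ) = 0 := by
  ext a a'; simp [ptraceB]

lemma ptraceA_zero : ptraceA (0 : Matrix (α × β) (α × β) ℂ) = 0 := by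
  ext b b'; simp [ptraceA]

lemma ptraceB_pure (φ : α × β → ℂ) :
    ptraceB (vecMulVec φ (star φ))
      = (Matrix.of fun (b : β) (a : α) => star (φ (a, b)))ᴴ
        * (Matrix.of fun (b : β) (a : α) => star (φ (a, b))) := by
  ext a a'
  simp [ptraceB, mul_apply, conjTranspose_apply, vecMulVec_apply]

lemma ptraceA_pure (φ : α × β → ℂ) :
    ptraceA (vecMulVec φ (star φ))
      = (Matrix.of fun (a : α) (b : β) => star (φ (a, b)))ᴴ
        * (Matrix.of fun (a : α) (b : β) => star (φ (a, b))) := by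
  ext b b'
  simp [ptraceA, mul_apply, conjTranspose_apply, vecMulVec_apply]

lemma psd_ptraceB (φ : α × β → ℂ) : (ptraceB (vecMulVec φ (star φ))).PosSemidef := by
  rw [ptraceB_pure]; exact posSemidef_conjTranspose_mul_self _

lemma psd_ptraceA (φ : α × β → ℂ) : (ptraceA (vecMulVec φ (star φ))).PosSemidef := by
  rw [ptraceA_pure]; exact posSemidef_conjTranspose_mul_self _

lemma trace_ptraceB_s7 (φ : α × β → ℂ) (hφ : ∑ p, star (φ p) * φ p = 1) :
    (ptraceB (vecMulVec φ (star φ))).trace = 1 := by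
  rw [trace]
  simp only [diag_apply, ptraceB, vecMulVec_apply, Pi.star_apply]
  rw [← hφ, Fintype.sum_prod_type]
  exact Finset.sum_congr rfl fun a _ => Finset.sum_congr rfl fun b _ => mul_comm _ _

lemma trace_ptraceA_s7 (φ : α × β → ℂ) (hφ : ∑ p, star (φ p) * φ p = 1) :
    (ptraceA (vecMulVec φ (star φ))).trace = 1 := by
  rw [trace]
  simp only [diag_apply, ptraceA, vecMulVec_apply, Pi.star_apply]
  rw [← hφ, Fintype.sum_prod_type]
  rw [Finset.sum_comm]
  exact Finset.sum_congr rfl fun b _ => Finset.sum_congr rfl fun a _ => mul_comm _ _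

lemma sum_mul_star_self_eq_zero {γ : Type*} [Fintype γ] (z : γ → ℂ)
    (h : ∑ i, z i * star (z i) = 0) : ∀ i, z i = 0 := by
  have hn : ∀ i, z i * star (z i) = ((Complex.normSq (z i) : ℝ) : ℂ) := fun i => by
    rw [Complex.star_def, Complex.mul_conj]
  rw [Finset.sum_congr rfl (fun i _ => hn i)] at h
  have h2 : ((∑ i, Complex.normSq (z i) : ℝ) : ℂ) = 0 := by push_cast; exact h
  have h3 : ∑ i, Complex.normSq (z i) = 0 := by exact_mod_cast h2
  intro i
  have := (Finset.sum_eq_zero_iff_of_nonneg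
    (fun i _ => Complex.normSq_nonneg (z i))).mp h3 i (Finset.mem_univ i)
  exact Complex.normSq_eq_zero.mp this

lemma prod_factor_one (u : α → ℂ) (v : β → ℂ)
    (hφ : ∑ p : α × β, star (u p.1 * v p.2) * (u p.1 * v p.2) = 1) :
    (∑ a, star (u a) * u a) * (∑ b, star (v b) * v b) = 1 := by
  rw [Finset.sum_mul_sum, ← hφ, Fintype.sum_prod_type]
  refine Finset.sum_congr rfl fun a _ => Finset.sum_congr rfl fun b _ => ?_
  simp only [star_mul']
  ring

lemma ptraceB_prod_entry (u : α → ℂ) (v : β → ℂ) (a a' : α) :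
    ptraceB (vecMulVec (fun p : α × β => u p.1 * v p.2) (star fun p => u p.1 * v p.2)) a a'
      = (∑ b, star (v b) * v b) * (u a * star (u a')) := by
  simp only [ptraceB, vecMulVec_apply, Pi.star_apply]
  rw [Finset.sum_mul]
  refine Finset.sum_congr rfl fun b _ => ?_
  simp only [star_mul']
  ring

lemma ptraceA_prod_entry (u : α → ℂ) (v : β → ℂ) (b b' : β) :
    ptraceA (vecMulVec (fun p : α × β => u p.1 * v p.2) (star fun p => u p.1 * v p.2)) b b'
      = (∑ a, star (u a) * u a) * (v b * star (v b')) := by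
  simp only [ptraceA, vecMulVec_apply, Pi.star_apply]
  rw [Finset.sum_mul]
  refine Finset.sum_congr rfl fun a _ => ?_
  simp only [star_mul']
  ring

lemma ptraceB_prod_idem (u : α → ℂ) (v : β → ℂ)
    (hφ : ∑ p : α × β, star (u p.1 * v p.2) * (u p.1 * v p.2) = 1) :
    ptraceB (vecMulVec (fun p : α × β => u p.1 * v p.2) (star fun p => u p.1 * v p.2))
      * ptraceB (vecMulVec (fun p : α × β => u p.1 * v p.2) (star fun p => u p.1 * v p.2))
      = ptraceB (vecMulVec (fun p : α × β => u p.1 * v p.2) (star fun p => u p.1 * v p.2)) := by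
  have hf := prod_factor_one u v hφ
  ext a a''
  rw [mul_apply, ptraceB_prod_entry u v a a'']
  rw [Finset.sum_congr rfl fun a' _ => by
    rw [ptraceB_prod_entry u v a a', ptraceB_prod_entry u v a' a'']]
  have : ∀ a' : α, (∑ b, star (v b) * v b) * (u a * star (u a'))
        * ((∑ b, star (v b) * v b) * (u a' * star (u a'')))
      = (star (u a') * u a')
        * ((∑ b, star (v b) * v b) * ((∑ b, star (v b) * v b) * (u a * star (u a'')))) := by
    intro a'; ring
  rw [Finset.sum_congr rfl fun a' _ => this a', ← Finset.sum_mul]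
  calc (∑ a', star (u a') * u a')
        * ((∑ b, star (v b) * v b) * ((∑ b, star (v b) * v b) * (u a * star (u a''))))
      = ((∑ a', star (u a') * u a') * (∑ b, star (v b) * v b))
        * ((∑ b, star (v b) * v b) * (u a * star (u a''))) := by ring
    _ = (∑ b, star (v b) * v b) * (u a * star (u a'')) := by rw [hf, one_mul]

lemma ptraceA_prod_idem (u : α → ℂ) (v : β → ℂ)
    (hφ : ∑ p : α × β, star (u p.1 * v p.2) * (u p.1 * v p.2) = 1) :
    ptraceA (vecMulVec (fun p : α × β => u p.1 * v p.2) (star fun p => u p.1 * v p.2))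
      * ptraceA (vecMulVec (fun p : α × β => u p.1 * v p.2) (star fun p => u p.1 * v p.2))
      = ptraceA (vecMulVec (fun p : α × β => u p.1 * v p.2) (star fun p => u p.1 * v p.2)) := by
  have hf := prod_factor_one u v hφ
  ext b b''
  rw [mul_apply, ptraceA_prod_entry u v b b'']
  rw [Finset.sum_congr rfl fun b' _ => by
    rw [ptraceA_prod_entry u v b b', ptraceA_prod_entry u v b' b'']]
  have : ∀ b' : β, (∑ a, star (u a) * u a) * (v b * star (v b'))
        * ((∑ a, star (u a) * u a) * (v b' * star (v b'')))
      = (star (v b') * v b')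
        * ((∑ a, star (u a) * u a) * ((∑ a, star (u a) * u a) * (v b * star (v b'')))) := by
    intro b'; ring
  rw [Finset.sum_congr rfl fun b' _ => this b', ← Finset.sum_mul]
  calc (∑ b', star (v b') * v b')
        * ((∑ a, star (u a) * u a) * ((∑ a, star (u a) * u a) * (v b * star (v b''))))
      = ((∑ a, star (u a) * u a) * (∑ b', star (v b') * v b'))
        * ((∑ a, star (u a) * u a) * (v b * star (v b''))) := by ring
    _ = (∑ a, star (u a) * u a) * (v b * star (v b'')) := by rw [hf, one_mul]

lemma basis_sum_one {n : Type*} [Fintype n] [DecidableEq n] {A : Matrix n n ℂ}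
    (h : A.IsHermitian) (k : n) :
    ∑ i, star (h.eigenvectorBasis k i) * h.eigenvectorBasis k i = 1 := by
  have := (orthonormal_iff_ite.mp h.eigenvectorBasis.orthonormal) k k
  simp only [PiLp.inner_apply, RCLike.inner_apply, if_pos rfl] at this
  rw [if_pos trivial] at this
  rw [← this]; exact Finset.sum_congr rfl fun i _ => mul_comm _ _

lemma extract (φ : α × β → ℂ) (hφ : ∑ p, star (φ p) * φ p = 1)
    (hall : ∀ i, evalsR (ptraceB (vecMulVec φ (star φ))) i = 0
      ∨ evalsR (ptraceB (vecMulVec φ (star φ))) i = 1) :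
    ∃ (u : α → ℂ) (v : β → ℂ), φ = fun p => u p.1 * v p.2 := by
  have hB : (ptraceB (vecMulVec φ (star φ))).IsHermitian := (psd_ptraceB φ).1
  set B := ptraceB (vecMulVec φ (star φ)) with hBdef
  have hev : ∀ k, hB.eigenvalues k = 0 ∨ hB.eigenvalues k = 1 := by
    intro k
    have := hall k
    simpa only [evalsR, dif_pos hB] using this
  have htr := trace_ptraceB_s7 φ hφ
  have hcard : (univ.filter (fun k => hB.eigenvalues k = (1:ℝ))).card = 1 :=
    card_filter_one hB hev htr
  obtain ⟨k₀, hk₀⟩ := Finset.card_eq_one.mp hcard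
  have hk₀mem : hB.eigenvalues k₀ = 1 := by
    have : k₀ ∈ univ.filter (fun k => hB.eigenvalues k = (1:ℝ)) :=
      hk₀ ▸ Finset.mem_singleton_self k₀
    exact (Finset.mem_filter.mp this).2
  have hzero : ∀ k, k ≠ k₀ → hB.eigenvalues k = 0 := by
    intro k hk
    rcases hev k with h0 | h0
    · exact h0
    · exfalso; apply hk
      have : k ∈ univ.filter (fun k => hB.eigenvalues k = (1:ℝ)) :=
        Finset.mem_filter.mpr ⟨Finset.mem_univ _, h0⟩
      rw [hk₀] at this
      exact Finset.mem_singleton.mp this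
  set w : α → ℂ := fun i => hB.eigenvectorBasis k₀ i with hwdef
  have hBw : B = vecMulVec w (star w) := by
    conv_lhs => rw [rank_one_spectral hB]
    rw [Finset.sum_eq_single k₀]
    · rw [hk₀mem]; norm_num; rfl
    · intro k _ hk; rw [hzero k hk]; norm_num
    · intro hku; exact absurd (Finset.mem_univ k₀) hku
  have hw1 : ∑ a, star (w a) * w a = 1 := basis_sum_one hB k₀
  have hBent : ∀ a a', (∑ b, φ (a, b) * star (φ (a', b))) = w a * star (w a') := by
    intro a a'
    simpa [hBdef, ptraceB, vecMulVec_apply] using congrFun (congrFun hBw a) a'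
  set v : β → ℂ := fun b => ∑ a, star (w a) * φ (a, b) with hvdef
  refine ⟨w, v, ?_⟩
  funext p
  obtain ⟨a₀, b₀⟩ := p
  set x : α → ℂ := fun a => φ (a, b₀) - v b₀ * w a with hxdef
  have hs1 : ∑ a, star (w a) * x a = 0 := by
    simp only [hxdef, mul_sub]
    rw [Finset.sum_sub_distrib]
    have h1 : ∑ a, star (w a) * (v b₀ * w a) = v b₀ * ∑ a, star (w a) * w a := by
      rw [Finset.mul_sum]
      exact Finset.sum_congr rfl fun a _ => by ring
    rw [h1, hw1, mul_one, hvdef, sub_self]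
  have hs1' : ∑ a, star (x a) * w a = 0 := by
    have h1 : ∑ a, star (x a) * w a = star (∑ a, star (w a) * x a) := by
      rw [star_sum]
      exact Finset.sum_congr rfl fun a _ => by simp [mul_comm]
    rw [h1, hs1, star_zero]
  have hs1'' : ∑ a, x a * star (w a) = 0 := by
    have h1 : ∑ a, x a * star (w a) = star (∑ a, star (x a) * w a) := by
      rw [star_sum]
      exact Finset.sum_congr rfl fun a _ => by simp [mul_comm]
    rw [h1, hs1', star_zero]
  set z : β → ℂ := fun b => ∑ a, star (x a) * φ (a, b) with hzdef
  have hstarz : ∀ b, star (z b) = ∑ a, x a * star (φ (a, b)) := by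
    intro b
    rw [hzdef, star_sum]
    exact Finset.sum_congr rfl fun a _ => by simp [mul_comm]
  have hinner : ∀ a, ∑ b, φ (a, b) * star (z b) = 0 := by
    intro a
    have step1 : ∑ b, φ (a, b) * star (z b)
        = ∑ b, ∑ a', x a' * (φ (a, b) * star (φ (a', b))) := by
      refine Finset.sum_congr rfl fun b _ => ?_
      rw [hstarz b, Finset.mul_sum]
      exact Finset.sum_congr rfl fun a' _ => by ring
    rw [step1, Finset.sum_comm]
    have step2 : ∀ a', ∑ b, x a' * (φ (a, b) * star (φ (a', b)))
        = x a' * (w a * star (w a')) := by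
      intro a'
      rw [← Finset.mul_sum, hBent a a']
    rw [Finset.sum_congr rfl fun a' _ => step2 a']
    have step3 : ∑ a', x a' * (w a * star (w a')) = w a * ∑ a', x a' * star (w a') := by
      rw [Finset.mul_sum]
      exact Finset.sum_congr rfl fun a' _ => by ring
    rw [step3, hs1'', mul_zero]
  have hkey : ∑ b, z b * star (z b) = 0 := by
    have step1 : ∀ b, z b * star (z b) = ∑ a, star (x a) * (φ (a, b) * star (z b)) := by
      intro b
      rw [hzdef, Finset.sum_mul]
      exact Finset.sum_congr rfl fun a _ => by ring
    rw [Finset.sum_congr rfl fun b _ => step1 b, Finset.sum_comm]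
    rw [Finset.sum_congr rfl fun a _ => (Finset.mul_sum _ _ _).symm]
    rw [Finset.sum_congr rfl fun a _ => by rw [hinner a, mul_zero]]
    exact Finset.sum_const_zero
  have hzb : ∀ b, z b = 0 := sum_mul_star_self_eq_zero z hkey
  have hxx : ∑ a, star (x a) * x a = 0 := by
    have h1 : z b₀ = ∑ a, star (x a) * x a + v b₀ * ∑ a, star (x a) * w a := by
      rw [hzdef, Finset.mul_sum, ← Finset.sum_add_distrib]
      refine Finset.sum_congr rfl fun a _ => ?_
      have : φ (a, b₀) = x a + v b₀ * w a := by rw [hxdef]; ring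
      rw [this]; ring
    have := hzb b₀
    rw [h1, hs1', mul_zero, add_zero] at this
    exact this
  have hx0 : ∀ a, x a = 0 := by
    have := sum_mul_star_self_eq_zero (fun a => star (x a)) (by
      simpa only [star_star] using
        (Finset.sum_congr rfl fun a _ => (mul_comm (star (x a)) (x a))) ▸ hxx)
    intro a
    have h := this a
    simpa using congrArg star h
  have := hx0 a₀
  rw [hxdef] at this
  have : φ (a₀, b₀) = v b₀ * w a₀ := by
    have h := sub_eq_zero.mp this
    exact h
  rw [this]; ring

end Aux


/-- for a pure bipartite state, `M` vanishes iff the state vector is a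
product state; in particular `M > 0` for every entangled pure state. -/
theorem Mmeas_pure_eq_zero_iff_product
    {α β : Type*} [Fintype α] [Fintype β] [DecidableEq α] [DecidableEq β]
    (φ : α × β → ℂ) (hφ : ∑ p, star (φ p) * φ p = 1) :
    (Mmeas (vecMulVec φ (star φ)) = 0 ↔
      ∃ (u : α → ℂ) (v : β → ℂ), φ = fun p => u p.1 * v p.2) ∧
    ((¬ ∃ (u : α → ℂ) (v : β → ℂ), φ = fun p => u p.1 * v p.2) →
      0 < Mmeas (vecMulVec φ (star φ))) := by
  have hherm : (vecMulVec φ (star φ)).IsHermitian := herm_pure φ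
  have hid := pure_idem φ hφ
  have htr := trace_pure φ hφ
  have hMA : MmeasA (vecMulVec φ (star φ))
      = ∑ i : α, Mterm 1 1 (evalsR (ptraceB (vecMulVec φ (star φ))) i) := by
    rw [MmeasA]
    exact Mmeas_reduce hherm hid htr ptraceB ptraceB_zero
  have hMB : MmeasB (vecMulVec φ (star φ))
      = ∑ i : β, Mterm 1 1 (evalsR (ptraceA (vecMulVec φ (star φ))) i) := by
    rw [MmeasB]
    exact Mmeas_reduce hherm hid htr ptraceA ptraceA_zero
  have hBH : (ptraceB (vecMulVec φ (star φ))).IsHermitian := (psd_ptraceB φ).1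
  have hAH : (ptraceA (vecMulVec φ (star φ))).IsHermitian := (psd_ptraceA φ).1
  have hdB : ∀ i, evalsR (ptraceB (vecMulVec φ (star φ))) i = hBH.eigenvalues i := fun i => by
    simp only [evalsR, dif_pos hBH]
  have hdA : ∀ i, evalsR (ptraceA (vecMulVec φ (star φ))) i = hAH.eigenvalues i := fun i => by
    simp only [evalsR, dif_pos hAH]
  have hnnB : ∀ i, 0 ≤ evalsR (ptraceB (vecMulVec φ (star φ))) i := fun i => by
    rw [hdB i]; exact (psd_ptraceB φ).eigenvalues_nonneg i
  have hnnA : ∀ i, 0 ≤ evalsR (ptraceA (vecMulVec φ (star φ))) i := fun i => by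
    rw [hdA i]; exact (psd_ptraceA φ).eigenvalues_nonneg i
  have hsB : ∑ i, evalsR (ptraceB (vecMulVec φ (star φ))) i = 1 := by
    rw [Finset.sum_congr rfl fun i _ => hdB i]
    exact sum_evals_eq_one hBH (trace_ptraceB_s7 φ hφ)
  have hsA : ∑ i, evalsR (ptraceA (vecMulVec φ (star φ))) i = 1 := by
    rw [Finset.sum_congr rfl fun i _ => hdA i]
    exact sum_evals_eq_one hAH (trace_ptraceA_s7 φ hφ)
  obtain ⟨hBnn, hBiff⟩ := aux_sum _ hnnB hsB
  obtain ⟨hAnn, hAiff⟩ := aux_sum _ hnnA hsA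
  have hMAge : 0 ≤ MmeasA (vecMulVec φ (star φ)) := hMA ▸ hBnn
  have hMBge : 0 ≤ MmeasB (vecMulVec φ (star φ)) := hMB ▸ hAnn
  have hiff : Mmeas (vecMulVec φ (star φ)) = 0 ↔
      ∃ (u : α → ℂ) (v : β → ℂ), φ = fun p => u p.1 * v p.2 := by
    constructor
    · intro h0
      rw [Mmeas] at h0
      have hA0 : MmeasA (vecMulVec φ (star φ)) = 0 := by linarith
      rw [hMA] at hA0
      exact extract φ hφ (hBiff.mp hA0)
    · rintro ⟨u, v, rfl⟩
      have hB0 : MmeasA (vecMulVec (fun p : α × β => u p.1 * v p.2)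
          (star fun p => u p.1 * v p.2)) = 0 := by
        rw [hMA]
        apply hBiff.mpr
        intro i
        rw [hdB i]
        exact evals_idem hBH (ptraceB_prod_idem u v hφ) i
      have hA0 : MmeasB (vecMulVec (fun p : α × β => u p.1 * v p.2)
          (star fun p => u p.1 * v p.2)) = 0 := by
        rw [hMB]
        apply hAiff.mpr
        intro i
        rw [hdA i]
        exact evals_idem hAH (ptraceA_prod_idem u v hφ) i
      rw [Mmeas, hB0, hA0]
      norm_num
  refine ⟨hiff, fun hn => ?_⟩
  have hne : Mmeas (vecMulVec φ (star φ)) ≠ 0 := fun hc => hn (hiff.mp hc)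
  have hge : 0 ≤ Mmeas (vecMulVec φ (star φ)) := by
    rw [Mmeas]; linarith
  exact lt_of_le_of_ne hge (Ne.symm hne)

end
end

section
/- For the two-qubit separable state ς = (1/2)(|00⟩⟨00| + |1+⟩⟨1+|) with |+⟩ = (|0⟩+|1⟩)/√2: (a) ς has no product eigenbasis; (b) M^A(ς) = 0; (c) the eigenvalues of Tr_A ς are (2±√2)/4; (d) M^B(ς) = −((2−√2)/4 − 0)log₂((2−√2)/4) − |(2+√2)/4 − 1| log₂((2+√2)/4), so M(ς) = M^B(ς)/2 > 0. -/
open Matrix Kronecker Finset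
open scoped ComplexOrder

attribute [local instance] Classical.propDecidable

noncomputable section

def ket00 : Fin 2 × Fin 2 → ℂ := fun p => if p = (0, 0) then 1 else 0
def ket01 : Fin 2 × Fin 2 → ℂ := fun p => if p = (0, 1) then 1 else 0
def ket10 : Fin 2 × Fin 2 → ℂ := fun p => if p = (1, 0) then 1 else 0
/-- `|1+⟩ = |1⟩ ⊗ (|0⟩ + |1⟩)/√2` -/
def ket1p : Fin 2 × Fin 2 → ℂ := fun p => if p.1 = 1 then ((1 / Real.sqrt 2 : ℝ) : ℂ) else 0
/-- `|φ⟩ = (|00⟩ + |11⟩)/√2` -/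
def ketBell : Fin 2 × Fin 2 → ℂ := fun p => if p.1 = p.2 then ((1 / Real.sqrt 2 : ℝ) : ℂ) else 0

/-- `ς = (1/2)(|00⟩⟨00| + |1+⟩⟨1+|)` -/
def varsigmaState : Matrix (Fin 2 × Fin 2) (Fin 2 × Fin 2) ℂ :=
  ((1 / 2 : ℝ) : ℂ) • (vecMulVec ket00 (star ket00) + vecMulVec ket1p (star ket1p))


set_option linter.unusedSectionVars false
set_option maxHeartbeats 1000000

namespace VAux

/- ### generic lemmas -/
section generic
variable {n : Type*} [Fintype n] [DecidableEq n]

lemma s2_sq : Real.sqrt 2 ^ 2 = 2 := Real.sq_sqrt (by norm_num)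
lemma s2_nonneg : (0:ℝ) ≤ Real.sqrt 2 := Real.sqrt_nonneg 2
lemma s2_lt_two : Real.sqrt 2 < 2 := by nlinarith [s2_sq, s2_nonneg]
lemma s2_gt_one : 1 < Real.sqrt 2 := by nlinarith [s2_sq, s2_nonneg]

lemma mulVec_vecMulVec (u w x : n → ℂ) : vecMulVec u w *ᵥ x = (∑ i, w i * x i) • u := by
  funext i
  simp [vecMulVec_apply, mulVec, dotProduct, Finset.mul_sum, mul_comm, mul_assoc, mul_left_comm]

lemma vecMulVec_mul (u v w x : n → ℂ) :
    vecMulVec u v * vecMulVec w x = (∑ i, v i * w i) • vecMulVec u x := by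
  ext i j
  simp [Matrix.mul_apply, vecMulVec_apply, Finset.sum_mul, Finset.mul_sum]
  congr 1; funext k; ring

lemma vec_smul_cancel {v : n → ℂ} (hv : v ≠ 0) {c d : ℂ} (h : c • v = d • v) : c = d := by
  obtain ⟨i, hi⟩ := Function.ne_iff.mp hv
  have := congrFun h i
  simp only [Pi.smul_apply, smul_eq_mul] at this
  exact mul_right_cancel₀ hi this

lemma eigen_mem {A : Matrix n n ℂ} (h : A.IsHermitian) (k : n) :
    ∃ v : n → ℂ, v ≠ 0 ∧ A *ᵥ v = ((h.eigenvalues k : ℝ) : ℂ) • v := by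
  refine ⟨⇑(h.eigenvectorBasis k), ?_, ?_⟩
  · intro hz
    exact h.eigenvectorBasis.orthonormal.ne_zero k (by ext i; exact congrFun hz i)
  · rw [h.mulVec_eigenvectorBasis]
    funext i
    simp [Complex.real_smul]

lemma spectral_sum {A : Matrix n n ℂ} (hA : A.IsHermitian) :
    A = ∑ k, ((hA.eigenvalues k : ℝ) : ℂ) •
      vecMulVec (fun i => hA.eigenvectorBasis k i) (star fun i => hA.eigenvectorBasis k i) := by
  conv_lhs => rw [hA.spectral_theorem, Unitary.conjStarAlgAut_apply]
  ext i j
  rw [Matrix.mul_apply]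
  simp only [Matrix.sum_apply, Matrix.smul_apply, vecMulVec_apply,
    Pi.star_apply, conjTranspose_apply, Matrix.mul_diagonal, Function.comp_apply,
    Matrix.star_apply]
  refine Finset.sum_congr rfl fun k _ => ?_
  rw [hA.eigenvectorUnitary_apply, hA.eigenvectorUnitary_apply]
  ring_nf
  simp [mul_comm, mul_left_comm, mul_assoc]

lemma trace_eq_sum_evals {A : Matrix n n ℂ} (hA : A.IsHermitian) :
    A.trace = ∑ k, ((hA.eigenvalues k : ℝ) : ℂ) := by
  conv_lhs => rw [hA.spectral_theorem, Unitary.conjStarAlgAut_apply]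
  rw [Matrix.trace_mul_comm, ← mul_assoc]
  have h1 : (star (hA.eigenvectorUnitary : Matrix n n ℂ)) * (hA.eigenvectorUnitary : Matrix n n ℂ) = 1 := by
    exact_mod_cast Unitary.coe_star_mul_self hA.eigenvectorUnitary
  rw [h1, one_mul, Matrix.trace_diagonal]
  simp

lemma evals_quad {A : Matrix n n ℂ} (hA : A.IsHermitian) (a b : ℝ)
    (hq : A * A = ((a:ℝ):ℂ) • A + ((b:ℝ):ℂ) • 1) (k : n) :
    hA.eigenvalues k ^ 2 = a * hA.eigenvalues k + b := by
  obtain ⟨v, hv, hmv⟩ := eigen_mem hA k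
  have h2 : (A * A) *ᵥ v = (((hA.eigenvalues k : ℝ) : ℂ) ^ 2) • v := by
    rw [← Matrix.mulVec_mulVec, hmv, Matrix.mulVec_smul, hmv, smul_smul, ← pow_two]
  rw [hq, Matrix.add_mulVec, Matrix.smul_mulVec, Matrix.smul_mulVec,
    Matrix.one_mulVec, hmv, smul_smul] at h2
  have h3 : (((a:ℝ):ℂ) * ((hA.eigenvalues k : ℝ):ℂ) + ((b:ℝ):ℂ)) • v
      = (((hA.eigenvalues k : ℝ) : ℂ) ^ 2) • v := by
    rw [add_smul]; exact h2
  have := vec_smul_cancel hv h3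
  exact_mod_cast this.symm

lemma evals_const {A : Matrix n n ℂ} (hA : A.IsHermitian) (c : ℝ)
    (hq : A = ((c:ℝ):ℂ) • 1) (k : n) : hA.eigenvalues k = c := by
  obtain ⟨v, hv, hmv⟩ := eigen_mem hA k
  have h1 : (((c:ℝ):ℂ) • 1 : Matrix n n ℂ) *ᵥ v = ((hA.eigenvalues k : ℝ) : ℂ) • v := by
    rw [← hq]; exact hmv
  rw [Matrix.smul_mulVec, Matrix.one_mulVec] at h1
  have := vec_smul_cancel hv h1
  exact_mod_cast this.symm

lemma evalsR_zero [Nonempty n] (i : n) : evalsR (0 : Matrix n n ℂ) i = 0 := by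
  have h0 : (0 : Matrix n n ℂ).IsHermitian := isHermitian_zero
  unfold evalsR
  rw [dif_pos h0]
  exact evals_const h0 0 (by simp) i

lemma evalsR_sconst (c : ℝ) [Nonempty n] (i : n) :
    evalsR (((c:ℝ):ℂ) • (1 : Matrix n n ℂ)) i = c := by
  have hh : (((c:ℝ):ℂ) • (1 : Matrix n n ℂ)).IsHermitian := by
    simp [Matrix.IsHermitian, conjTranspose_smul, conjTranspose_one, Complex.conj_ofReal]
  unfold evalsR
  rw [dif_pos hh]
  exact evals_const hh c rfl i

lemma sum_mulVec' {ι : Type*} (s : Finset ι) (M : ι → Matrix n n ℂ) (v : n → ℂ) :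
    (∑ j ∈ s, M j) *ᵥ v = ∑ j ∈ s, M j *ᵥ v := by
  funext i
  simp [mulVec, dotProduct, Finset.sum_apply, Finset.sum_mul, Matrix.sum_apply]
  rw [Finset.sum_comm]

lemma trace_vecMulVec (u v : n → ℂ) : (vecMulVec u v).trace = ∑ i, v i * u i := by
  simp [Matrix.trace, Matrix.diag, vecMulVec_apply, mul_comm]

end generic

section prodlem
variable {α β : Type*} [Fintype α] [Fintype β]

lemma kron_mulVec (A : Matrix α α ℂ) (B : Matrix β β ℂ) (x : α → ℂ) (y : β → ℂ) :
    (A ⊗ₖ B) *ᵥ (fun p => x p.1 * y p.2) = fun p => (A *ᵥ x) p.1 * (B *ᵥ y) p.2 := by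
  funext p
  simp only [mulVec, dotProduct, kroneckerMap_apply, Fintype.sum_prod_type]
  rw [Finset.sum_mul_sum]
  refine Finset.sum_congr rfl fun q1 _ => Finset.sum_congr rfl fun q2 _ => by ring

lemma ptraceA_kron (X : Matrix α α ℂ) (Y : Matrix β β ℂ) :
    ptraceA (X ⊗ₖ Y) = X.trace • Y := by
  funext b b'
  simp [ptraceA, Matrix.trace, Matrix.diag, Finset.sum_mul]

lemma ptraceA_smul (c : ℂ) (M : Matrix (α × β) (α × β) ℂ) :
    ptraceA (c • M) = c • ptraceA M := by
  funext b b'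
  simp [ptraceA, Finset.mul_sum]

lemma ptraceA_sum {ι : Type*} (s : Finset ι) (M : ι → Matrix (α × β) (α × β) ℂ) :
    ptraceA (∑ j ∈ s, M j) = ∑ j ∈ s, ptraceA (M j) := by
  funext b b'
  simp [ptraceA, Matrix.sum_apply, Finset.sum_apply]
  rw [Finset.sum_comm]

lemma ptraceA_zero : ptraceA (0 : Matrix (α × β) (α × β) ℂ) = 0 := by
  funext b b'
  simp [ptraceA]

lemma ptraceB_zero : ptraceB (0 : Matrix (α × β) (α × β) ℂ) = 0 := by
  funext a a'
  simp [ptraceB]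

end prodlem

/- ### nim and Mterm computations -/

lemma nim_zero (x : ℝ) : nim 0 x = 0 := if_pos rfl

lemma Mterm_zero (T : ℝ) : Mterm 0 T 0 = 0 := by
  simp [Mterm, nim_zero]

lemma nim_half_half : nim (1/2) (1/2) = 1/2 := by
  rw [nim, if_neg (by norm_num)]
  norm_num

lemma Mterm_half (T : ℝ) : Mterm (1/2) T (1/2) = 0 := by
  rw [Mterm, show (1/2 - nim (1/2) (1/2) : ℝ) = 0 by rw [nim_half_half]; ring]
  simp

lemma nim_l1 : nim (1/2) ((2 - Real.sqrt 2)/4) = 0 := by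
  have h1 := s2_gt_one
  have h2 := s2_lt_two
  rw [nim, if_neg (by norm_num)]
  have hx : ((2 - Real.sqrt 2)/4) / (1/2 : ℝ) = (2 - Real.sqrt 2)/2 := by ring
  have hfl : ⌊((2 - Real.sqrt 2)/4) / (1/2 : ℝ)⌋ = 0 := by
    rw [hx, Int.floor_eq_iff]
    constructor <;> push_cast <;> nlinarith
  have hcl : ⌈((2 - Real.sqrt 2)/4) / (1/2 : ℝ)⌉ = 1 := by
    rw [hx, Int.ceil_eq_iff]
    constructor <;> push_cast <;> nlinarith
  rw [hfl, hcl, if_pos (by push_cast; nlinarith)]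
  norm_num

lemma nim_l2 : nim (1/2) ((2 + Real.sqrt 2)/4) = 1 := by
  have h1 := s2_gt_one
  have h2 := s2_lt_two
  rw [nim, if_neg (by norm_num)]
  have hx : ((2 + Real.sqrt 2)/4) / (1/2 : ℝ) = (2 + Real.sqrt 2)/2 := by ring
  have hfl : ⌊((2 + Real.sqrt 2)/4) / (1/2 : ℝ)⌋ = 1 := by
    rw [hx, Int.floor_eq_iff]
    constructor <;> push_cast <;> nlinarith
  have hcl : ⌈((2 + Real.sqrt 2)/4) / (1/2 : ℝ)⌉ = 2 := by
    rw [hx, Int.ceil_eq_iff]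
    constructor <;> push_cast <;> nlinarith
  rw [hfl, hcl, if_neg (by push_cast; nlinarith)]
  norm_num

lemma Mterm_l1 : Mterm (1/2) 1 ((2 - Real.sqrt 2)/4)
    = -(((2 - Real.sqrt 2)/4 - 0) * Real.logb 2 ((2 - Real.sqrt 2)/4)) := by
  have h2 := s2_lt_two
  rw [Mterm, nim_l1, div_one, abs_of_nonneg (by nlinarith)]

lemma Mterm_l2 : Mterm (1/2) 1 ((2 + Real.sqrt 2)/4)
    = -(|(2 + Real.sqrt 2)/4 - 1| * Real.logb 2 ((2 + Real.sqrt 2)/4)) := by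
  rw [Mterm, nim_l2, div_one]

lemma quad_root {t : ℝ} (h : t^2 = t + (-1)/8) :
    t = (2 - Real.sqrt 2)/4 ∨ t = (2 + Real.sqrt 2)/4 := by
  have hf : (t - (2 - Real.sqrt 2)/4) * (t - (2 + Real.sqrt 2)/4) = 0 := by
    linear_combination h - (1/16 : ℝ) * s2_sq
  rcases mul_eq_zero.mp hf with h' | h'
  · left; linarith [sub_eq_zero.mp h']
  · right; linarith [sub_eq_zero.mp h']

/- ### concrete facts about ς -/

lemma varsigma_apply (p q : Fin 2 × Fin 2) :
    varsigmaState p q = (if p = (0,0) ∧ q = (0,0) then (1/2 : ℂ) else 0)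
      + (if p.1 = 1 ∧ q.1 = 1 then (1/4:ℂ) else 0) := by
  simp only [varsigmaState, Matrix.smul_apply, Matrix.add_apply, vecMulVec_apply,
    Pi.star_apply, ket00, ket1p, RCLike.star_def, apply_ite, _root_.map_one, map_zero,
    Complex.conj_ofReal]
  by_cases h1 : p = (0,0) <;> by_cases h2 : q = (0,0) <;>
    by_cases h3 : p.1 = 1 <;> by_cases h4 : q.1 = 1 <;>
    simp_all <;> push_cast <;>
    first
    | (exfalso; rw [h1] at h3; exact absurd h3 (by decide))
    | (exfalso; rw [h2] at h4; exact absurd h4 (by decide))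
    | (rw [inv_pow, ← Complex.ofReal_pow, Real.sq_sqrt (by norm_num)]; norm_num)
    | (rw [← mul_inv, ← Complex.ofReal_mul, Real.mul_self_sqrt (by norm_num)]; norm_num)
    | ring

lemma ip00 : ∑ i, star (ket00 i) * ket00 i = (1:ℂ) := by
  simp [ket00, Fintype.sum_prod_type, Fin.sum_univ_two, apply_ite]

lemma ip0p : ∑ i, star (ket00 i) * ket1p i = (0:ℂ) := by
  simp [ket00, ket1p, Fintype.sum_prod_type, Fin.sum_univ_two, apply_ite]

lemma ipp0 : ∑ i, star (ket1p i) * ket00 i = (0:ℂ) := by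
  rw [Fintype.sum_prod_type]
  rw [Fin.sum_univ_two]
  rw [Fin.sum_univ_two, Fin.sum_univ_two]
  simp [ket00, ket1p]

lemma ippp : ∑ i, star (ket1p i) * ket1p i = (1:ℂ) := by
  rw [Fintype.sum_prod_type]
  rw [Fin.sum_univ_two]
  rw [Fin.sum_univ_two, Fin.sum_univ_two]
  simp [ket1p, Complex.conj_ofReal]
  rw [← mul_inv, ← Complex.ofReal_mul, Real.mul_self_sqrt (by norm_num)]
  norm_num

lemma herm : varsigmaState.IsHermitian := by
  ext p q
  rw [conjTranspose_apply, varsigma_apply, varsigma_apply]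
  simp [apply_ite (starRingEnd ℂ), and_comm, map_ofNat]

lemma vs_mul_self : varsigmaState * varsigmaState
    = (((1:ℝ)/2 : ℝ):ℂ) • varsigmaState + ((0:ℝ):ℂ) • 1 := by
  have e11 := vecMulVec_mul ket00 (star ket00) ket00 (star ket00)
  have e12 := vecMulVec_mul ket00 (star ket00) ket1p (star ket1p)
  have e21 := vecMulVec_mul ket1p (star ket1p) ket00 (star ket00)
  have e22 := vecMulVec_mul ket1p (star ket1p) ket1p (star ket1p)
  simp only [Pi.star_apply] at e11 e12 e21 e22
  unfold varsigmaState
  rw [Matrix.smul_mul, Matrix.mul_smul, add_mul, mul_add, mul_add, e11, e12, e21, e22,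
    ip00, ip0p, ipp0, ippp]
  push_cast
  simp only [one_smul, zero_smul, add_zero, zero_add, smul_smul]

lemma vs_trace : varsigmaState.trace = 1 := by
  simp [Matrix.trace, Matrix.diag, Fintype.sum_prod_type, Fin.sum_univ_two, varsigma_apply]
  norm_num

lemma vs_ptraceB : ptraceB varsigmaState = (((1:ℝ)/2 : ℝ):ℂ) • (1 : Matrix (Fin 2) (Fin 2) ℂ) := by
  ext a a'
  fin_cases a <;> fin_cases a' <;>
    simp [ptraceB, Fin.sum_univ_two, varsigma_apply, Matrix.one_apply] <;> norm_num

def Bmat : Matrix (Fin 2) (Fin 2) ℂ := !![(3/4:ℂ), 1/4; 1/4, 1/4]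

lemma vs_ptraceA : ptraceA varsigmaState = Bmat := by
  ext b b'
  fin_cases b <;> fin_cases b' <;>
    simp [ptraceA, Fin.sum_univ_two, varsigma_apply, Bmat] <;> norm_num

lemma B_herm : Bmat.IsHermitian := by
  ext i j
  fin_cases i <;> fin_cases j <;> simp [Bmat] <;> norm_num

lemma B_mul_self : Bmat * Bmat = ((1:ℝ):ℂ) • Bmat + (((-1:ℝ)/8 : ℝ):ℂ) • 1 := by
  ext i j
  fin_cases i <;> fin_cases j <;>
    simp [Bmat, Matrix.mul_apply, Fin.sum_univ_two, Matrix.one_apply] <;> norm_num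

lemma B_trace : Bmat.trace = 1 := by
  simp [Matrix.trace, Matrix.diag, Fin.sum_univ_two, Bmat]
  norm_num

end VAux

namespace VAux

/- ### spectral facts for ς -/

lemma hv01 (k : Fin 2 × Fin 2) : herm.eigenvalues k = 0 ∨ herm.eigenvalues k = 1/2 := by
  have h := evals_quad herm (1/2) 0 vs_mul_self k
  have h2 : herm.eigenvalues k * (herm.eigenvalues k - 1/2) = 0 := by nlinarith [h]
  rcases mul_eq_zero.mp h2 with h' | h'
  · exact Or.inl h'
  · exact Or.inr (by linarith [sub_eq_zero.mp h'])

lemma evsum : ∑ k, herm.eigenvalues k = 1 := by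
  have h := trace_eq_sum_evals herm
  rw [vs_trace] at h
  exact_mod_cast h.symm

lemma hcard : (univ.filter (fun k => herm.eigenvalues k = (1/2:ℝ))).card = 2 := by
  have hs := evsum
  rw [← Finset.sum_filter_add_sum_filter_not univ (fun k => herm.eigenvalues k = (1/2:ℝ))] at hs
  have h1 : ∑ k ∈ univ.filter (fun k => herm.eigenvalues k = (1/2:ℝ)), herm.eigenvalues k
      = ((univ.filter (fun k => herm.eigenvalues k = (1/2:ℝ))).card : ℝ) * (1/2 : ℝ) := by
    rw [Finset.sum_congr rfl (fun k hk => (Finset.mem_filter.mp hk).2)]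
    rw [Finset.sum_const, nsmul_eq_mul]
  have h2 : ∑ k ∈ univ.filter (fun k => ¬ herm.eigenvalues k = (1/2:ℝ)), herm.eigenvalues k
      = 0 := by
    apply Finset.sum_eq_zero
    intro k hk
    rcases hv01 k with h | h
    · exact h
    · exact absurd h (Finset.mem_filter.mp hk).2
  rw [h1, h2, add_zero] at hs
  have : ((univ.filter (fun k => herm.eigenvalues k = (1/2:ℝ))).card : ℝ) = 2 := by linarith
  exact_mod_cast this

lemma evalsR_vs : evalsR varsigmaState = herm.eigenvalues := by
  unfold evalsR
  rw [dif_pos herm]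

lemma vs_dimEig : dimEig varsigmaState (1/2) = 2 := by
  unfold dimEig
  rw [dif_pos herm]
  convert hcard using 2

lemma vs_trunc : trunc varsigmaState (1/2) = varsigmaState := by
  unfold trunc eigProj
  rw [dif_pos herm, Finset.smul_sum]
  conv_rhs => rw [spectral_sum herm]
  conv_rhs => rw [← Finset.sum_filter_add_sum_filter_not univ
    (fun k => herm.eigenvalues k = (1/2:ℝ))]
  have h2 : ∑ k ∈ univ.filter (fun k => ¬ herm.eigenvalues k = (1/2:ℝ)),
      ((herm.eigenvalues k : ℝ) : ℂ) •
        vecMulVec (fun i => herm.eigenvectorBasis k i) (star fun i => herm.eigenvectorBasis k i)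
      = 0 := by
    apply Finset.sum_eq_zero
    intro k hk
    have h0 : herm.eigenvalues k = 0 := by
      rcases hv01 k with h | h
      · exact h
      · exact absurd h (Finset.mem_filter.mp hk).2
    rw [h0]
    simp
  rw [h2, add_zero]
  refine (Finset.sum_congr ?_ ?_).symm
  · congr 1
  · intro k hk
    rw [(Finset.mem_filter.mp hk).2]

lemma trunc_zero' : trunc varsigmaState 0 = 0 := by
  unfold trunc
  simp

lemma partA : MmeasA varsigmaState = 0 := by
  rw [MmeasA]
  apply Finset.sum_eq_zero
  intro η hη
  obtain ⟨k, -, hk⟩ := Finset.mem_image.mp hη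
  rw [evalsR_vs] at hk
  rcases hv01 k with h | h
  · have hη0 : η = 0 := by rw [← hk, h]
    subst hη0
    apply Finset.sum_eq_zero
    intro i _
    rw [trunc_zero', ptraceB_zero, evalsR_zero]
    exact Mterm_zero _
  · have hη0 : η = 1/2 := by rw [← hk, h]
    subst hη0
    apply Finset.sum_eq_zero
    intro i _
    rw [vs_trunc, vs_ptraceB, evalsR_sconst]
    exact Mterm_half _

lemma himg : Finset.image (evalsR varsigmaState) univ = ({0, 1/2} : Finset ℝ) := by
  have hhalf : ∃ k, herm.eigenvalues k = 1/2 := by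
    have hpos : 0 < (univ.filter (fun k => herm.eigenvalues k = (1/2:ℝ))).card := by
      rw [hcard]; norm_num
    obtain ⟨k, hk⟩ := Finset.card_pos.mp hpos
    exact ⟨k, (Finset.mem_filter.mp hk).2⟩
  have hzero : ∃ k, herm.eigenvalues k = 0 := by
    by_contra hcon
    push_neg at hcon
    have hall : ∀ k, herm.eigenvalues k = 1/2 := fun k => (hv01 k).resolve_left (hcon k)
    have huniv : (univ.filter (fun k => herm.eigenvalues k = (1/2:ℝ))) = univ :=
      Finset.filter_true_of_mem (fun k _ => hall k)
    have := hcard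
    rw [huniv, Finset.card_univ] at this
    simp [Fintype.card_prod] at this
  ext x
  simp only [Finset.mem_image, Finset.mem_insert, Finset.mem_singleton, Finset.mem_univ,
    true_and, evalsR_vs]
  constructor
  · rintro ⟨k, hk⟩
    rcases hv01 k with h | h
    · left; rw [← hk, h]
    · right; rw [← hk, h]
  · rintro (rfl | rfl)
    · exact hzero
    · exact hhalf

end VAux

namespace VAux

/- ### part B -/

lemma B_evals : (B_herm.eigenvalues 0 = (2 - Real.sqrt 2)/4 ∧ B_herm.eigenvalues 1 = (2 + Real.sqrt 2)/4)
    ∨ (B_herm.eigenvalues 0 = (2 + Real.sqrt 2)/4 ∧ B_herm.eigenvalues 1 = (2 - Real.sqrt 2)/4) := by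
  have hq : ∀ i, B_herm.eigenvalues i ^ 2 = B_herm.eigenvalues i + (-1)/8 := by
    intro i
    have := evals_quad B_herm 1 ((-1:ℝ)/8) B_mul_self i
    linarith [this]
  have hsum : B_herm.eigenvalues 0 + B_herm.eigenvalues 1 = 1 := by
    have h := trace_eq_sum_evals B_herm
    rw [B_trace, Fin.sum_univ_two] at h
    exact_mod_cast h.symm
  have hg := s2_gt_one
  rcases quad_root (hq 0) with h0 | h0 <;> rcases quad_root (hq 1) with h1 | h1
  · exfalso; rw [h0, h1] at hsum; nlinarith
  · exact Or.inl ⟨h0, h1⟩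
  · exact Or.inr ⟨h0, h1⟩
  · exfalso; rw [h0, h1] at hsum; nlinarith

lemma evalsR_B : evalsR Bmat = B_herm.eigenvalues := by
  unfold evalsR
  rw [dif_pos B_herm]

lemma partB : MmeasB varsigmaState =
    -(((2 - Real.sqrt 2) / 4 - 0) * Real.logb 2 ((2 - Real.sqrt 2) / 4))
      - |(2 + Real.sqrt 2) / 4 - 1| * Real.logb 2 ((2 + Real.sqrt 2) / 4) := by
  rw [MmeasB, himg]
  rw [Finset.sum_insert (by norm_num), Finset.sum_singleton]
  have hzero : (∑ i : Fin 2, Mterm 0 (0 * (dimEig varsigmaState 0 : ℝ))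
      (evalsR (ptraceA (trunc varsigmaState 0)) i)) = 0 := by
    apply Finset.sum_eq_zero
    intro i _
    rw [trunc_zero', ptraceA_zero, evalsR_zero]
    exact Mterm_zero _
  rw [hzero, zero_add, vs_trunc, vs_ptraceA, vs_dimEig]
  have harg : (1/2 : ℝ) * ((2:ℕ):ℝ) = 1 := by norm_num
  rw [harg, Fin.sum_univ_two, evalsR_B]
  rcases B_evals with ⟨h0, h1⟩ | ⟨h0, h1⟩ <;> rw [h0, h1, Mterm_l1, Mterm_l2] <;> ring

/- ### part C : spectrum -/

lemma partC : spectrum ℂ (ptraceA varsigmaState) =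
    {(((2 - Real.sqrt 2) / 4 : ℝ) : ℂ), (((2 + Real.sqrt 2) / 4 : ℝ) : ℂ)} := by
  rw [vs_ptraceA]
  have hs2 : ((Real.sqrt 2 : ℝ) : ℂ) ^ 2 = 2 := by
    rw [← Complex.ofReal_pow, s2_sq]; norm_num
  ext μ
  have hdet : ((algebraMap ℂ (Matrix (Fin 2) (Fin 2) ℂ) μ) - Bmat).det
      = (μ - (((2 - Real.sqrt 2) / 4 : ℝ) : ℂ)) * (μ - (((2 + Real.sqrt 2) / 4 : ℝ) : ℂ)) := by
    rw [Matrix.det_fin_two]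
    simp [Matrix.sub_apply, Matrix.algebraMap_matrix_apply, Bmat]
    ring_nf
    linear_combination ((1:ℂ)/16) * hs2
  rw [spectrum.mem_iff, Matrix.isUnit_iff_isUnit_det, isUnit_iff_ne_zero, not_not, hdet]
  rw [mul_eq_zero, sub_eq_zero, sub_eq_zero]
  simp [Set.mem_insert_iff, Set.mem_singleton_iff]

end VAux

namespace VAux

lemma part1 : ¬ HasProductEigenbasis varsigmaState := by
  rintro ⟨a, b, e, ha, hb, heq⟩
  -- nonvanishing of the basis vectors
  have hane : ∀ j, a j ≠ 0 := by
    intro j hj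
    have h := ha j j
    simp only [hj, Pi.zero_apply, mul_zero, star_zero, zero_mul, Finset.sum_const_zero,
      if_pos rfl] at h
    exact one_ne_zero h.symm
  have hbne : ∀ k, b k ≠ 0 := by
    intro k hk
    have h := hb k k
    simp only [hk, Pi.zero_apply, mul_zero, star_zero, zero_mul, Finset.sum_const_zero,
      if_pos rfl] at h
    exact one_ne_zero h.symm
  -- orthonormal collapse of rank-one projectors
  have hA : ∀ j' j, vecMulVec (a j') (star (a j')) *ᵥ a j
      = (if j' = j then (1:ℂ) else 0) • a j' := by
    intro j' j
    rw [mulVec_vecMulVec]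
    congr 1
    simpa using ha j' j
  have hB : ∀ k' k, vecMulVec (b k') (star (b k')) *ᵥ b k
      = (if k' = k then (1:ℂ) else 0) • b k' := by
    intro k' k
    rw [mulVec_vecMulVec]
    congr 1
    simpa using hb k' k
  have hterm : ∀ j' k' j k,
      (((e j' k' : ℝ):ℂ) •
          (vecMulVec (a j') (star (a j')) ⊗ₖ vecMulVec (b k') (star (b k')))) *ᵥ
        (fun p => a j p.1 * b k p.2)
      = if j' = j ∧ k' = k then ((e j k : ℝ):ℂ) • (fun p => a j p.1 * b k p.2) else 0 := by
    intro j' k' j k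
    rw [Matrix.smul_mulVec, kron_mulVec, hA, hB]
    by_cases hj : j' = j <;> by_cases hk : k' = k <;>
      · funext p
        simp [hj, hk, Pi.smul_apply]
  have hkey : ∀ j k, varsigmaState *ᵥ (fun p => a j p.1 * b k p.2)
      = ((e j k : ℝ):ℂ) • (fun p => a j p.1 * b k p.2) := by
    intro j k
    conv_lhs => rw [heq]
    rw [sum_mulVec']
    simp only [sum_mulVec', hterm]
    fin_cases j <;> fin_cases k <;> simp [Fin.sum_univ_two]
  have hvne : ∀ j k, (fun p : Fin 2 × Fin 2 => a j p.1 * b k p.2) ≠ 0 := by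
    intro j k h
    obtain ⟨i1, hi1⟩ := Function.ne_iff.mp (hane j)
    obtain ⟨i2, hi2⟩ := Function.ne_iff.mp (hbne k)
    have h2 := congrFun h (i1, i2)
    simp only [Pi.zero_apply] at h2
    exact (mul_ne_zero hi1 hi2) h2
  -- each e j k is an eigenvalue of ς, hence 0 or 1/2
  have he01 : ∀ j k, e j k = 0 ∨ e j k = 1/2 := by
    intro j k
    have h1 : (varsigmaState * varsigmaState) *ᵥ (fun p : Fin 2 × Fin 2 => a j p.1 * b k p.2)
        = (((e j k:ℝ):ℂ))^2 • (fun p : Fin 2 × Fin 2 => a j p.1 * b k p.2) := by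
      rw [← Matrix.mulVec_mulVec, hkey, Matrix.mulVec_smul, hkey, smul_smul, ← pow_two]
    rw [vs_mul_self, Matrix.add_mulVec, Matrix.smul_mulVec, Matrix.smul_mulVec,
      Matrix.one_mulVec, hkey, smul_smul] at h1
    have h2 : ((((1:ℝ)/2:ℝ):ℂ) * ((e j k:ℝ):ℂ) + ((0:ℝ):ℂ)) •
        (fun p : Fin 2 × Fin 2 => a j p.1 * b k p.2)
        = (((e j k:ℝ):ℂ))^2 • (fun p : Fin 2 × Fin 2 => a j p.1 * b k p.2) := by
      rw [add_smul]; exact h1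
    have h3 := vec_smul_cancel (hvne j k) h2
    have h4 : (1/2 : ℝ) * e j k + 0 = (e j k)^2 := by exact_mod_cast h3
    have h5 : e j k * (e j k - 1/2) = 0 := by nlinarith [h4]
    rcases mul_eq_zero.mp h5 with h' | h'
    · exact Or.inl h'
    · exact Or.inr (by linarith [sub_eq_zero.mp h'])
  -- partial trace over A in the product basis
  have htr : ∀ j, (vecMulVec (a j) (star (a j))).trace = 1 := by
    intro j
    rw [trace_vecMulVec]
    have := ha j j
    rw [if_pos rfl] at this
    rw [← this]
    refine Finset.sum_congr rfl fun i _ => ?_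
    simp [mul_comm]
  have hpA : Bmat = ∑ k, (∑ j, ((e j k:ℝ):ℂ)) • vecMulVec (b k) (star (b k)) := by
    rw [← vs_ptraceA, heq, ptraceA_sum]
    simp only [ptraceA_sum, ptraceA_smul, ptraceA_kron, htr, one_smul]
    rw [Finset.sum_comm]
    refine Finset.sum_congr rfl fun k _ => ?_
    rw [Finset.sum_smul]
  have hBb : ∀ k, Bmat *ᵥ b k = (∑ j, ((e j k:ℝ):ℂ)) • b k := by
    intro k
    rw [hpA, sum_mulVec']
    simp only [Matrix.smul_mulVec, hB]
    fin_cases k <;> simp [Fin.sum_univ_two]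
  -- quadratic equation for the column sums
  have hq : ∀ k, ((1:ℝ):ℂ) * (∑ j, ((e j k:ℝ):ℂ)) + (((-1:ℝ)/8 : ℝ):ℂ)
      = (∑ j, ((e j k:ℝ):ℂ))^2 := by
    intro k
    have h1 : (Bmat * Bmat) *ᵥ b k = ((∑ j, ((e j k:ℝ):ℂ))^2) • b k := by
      rw [← Matrix.mulVec_mulVec, hBb, Matrix.mulVec_smul, hBb, smul_smul, ← pow_two]
    rw [B_mul_self, Matrix.add_mulVec, Matrix.smul_mulVec, Matrix.smul_mulVec,
      Matrix.one_mulVec, hBb, smul_smul] at h1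
    have h2 : (((1:ℝ):ℂ) * (∑ j, ((e j k:ℝ):ℂ)) + (((-1:ℝ)/8 : ℝ):ℂ)) • b k
        = ((∑ j, ((e j k:ℝ):ℂ))^2) • b k := by
      rw [add_smul]; exact h1
    exact vec_smul_cancel (hbne k) h2
  -- contradiction
  have hc := hq 0
  rw [Fin.sum_univ_two] at hc
  rcases he01 0 0 with h00 | h00 <;> rcases he01 1 0 with h10 | h10 <;>
    rw [h00, h10] at hc <;>
    · push_cast at hc
      norm_num at hc

end VAux

/-- ς has no product eigenbasis, `M^A(ς) = 0`, the eigenvalues of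
`Tr_A ς` are `(2 ± √2)/4`, and `M^B(ς)` equals the stated value, so
`M(ς) = M^B(ς)/2 > 0`. -/
theorem varsigma_properties :
    ¬ HasProductEigenbasis varsigmaState ∧
    MmeasA varsigmaState = 0 ∧
    spectrum ℂ (ptraceA varsigmaState) =
      {(((2 - Real.sqrt 2) / 4 : ℝ) : ℂ), (((2 + Real.sqrt 2) / 4 : ℝ) : ℂ)} ∧
    MmeasB varsigmaState =
      -(((2 - Real.sqrt 2) / 4 - 0) * Real.logb 2 ((2 - Real.sqrt 2) / 4))
      - |(2 + Real.sqrt 2) / 4 - 1| * Real.logb 2 ((2 + Real.sqrt 2) / 4) ∧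
    Mmeas varsigmaState = MmeasB varsigmaState / 2 ∧
    0 < Mmeas varsigmaState := by
  have h5 : Mmeas varsigmaState = MmeasB varsigmaState / 2 := by
    rw [Mmeas, VAux.partA]
    ring
  refine ⟨VAux.part1, VAux.partA, VAux.partC, VAux.partB, h5, ?_⟩
  rw [h5, VAux.partB]
  have hg1 := VAux.s2_gt_one
  have hg2 := VAux.s2_lt_two
  have hl1pos : (0:ℝ) < (2 - Real.sqrt 2)/4 := by linarith
  have hl1lt : (2 - Real.sqrt 2)/4 < 1 := by linarith
  have hl2pos : (0:ℝ) < (2 + Real.sqrt 2)/4 := by linarith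
  have hl2lt : (2 + Real.sqrt 2)/4 < 1 := by linarith
  have hlog1 : Real.logb 2 ((2 - Real.sqrt 2)/4) < 0 :=
    Real.logb_neg (by norm_num) hl1pos hl1lt
  have hlog2 : Real.logb 2 ((2 + Real.sqrt 2)/4) < 0 :=
    Real.logb_neg (by norm_num) hl2pos hl2lt
  have h1 : 0 < -(((2 - Real.sqrt 2)/4 - 0) * Real.logb 2 ((2 - Real.sqrt 2)/4)) := by
    nlinarith
  have h2 : 0 ≤ -(|(2 + Real.sqrt 2)/4 - 1| * Real.logb 2 ((2 + Real.sqrt 2)/4)) := by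
    nlinarith [abs_nonneg ((2 + Real.sqrt 2)/4 - 1)]
  linarith

end
end
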